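/- arXiv:1902.06901 — 2 statements merged into one kernel-verified Lean document; each statement's English description precedes it below -/
import Mathlib

section
/- Let X and Y be locally compact, connected Hausdorff spaces, ρ a quasi-integral on C_c(X) and η a quasi-integral on C_c(Y). If the topological measure μ_ρ corresponding to ρ assumes more than two values and the functional η × ρ on C_c(X × Y) is a quasi-integral, then η is linear, i.e., η(g + h) = η(g) + η(h) for all g, h ∈ C_c(Y). -/
open scoped ENNReal CompactlySupported
open CompactlySupportedContinuousMap

namespace QLF

variable {X Y : Type*}

/-- Membership in the singly generated subalgebra `B(f)`:
`g ∈ B(f)` iff `g = φ ∘ f` for some continuous `φ` with `φ 0 = 0`. -/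
def InB [TopologicalSpace X] (f g : C_c(X, ℝ)) : Prop :=
  ∃ φ : C(ℝ, ℝ), φ 0 = 0 ∧ ∀ x, g x = φ (f x)

/-- A quasi-integral (quasi-linear functional) on `C_c(X)`. -/
structure IsQuasiIntegral [TopologicalSpace X] (ρ : C_c(X, ℝ) → ℝ) : Prop where
  smul : ∀ (a : ℝ) (f : C_c(X, ℝ)), ρ (a • f) = a * ρ f
  add : ∀ f g h : C_c(X, ℝ), InB f g → InB f h → ρ (g + h) = ρ g + ρ h
  pos : ∀ f : C_c(X, ℝ), (∀ x, 0 ≤ f x) → 0 ≤ ρ f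

/-- The value of the topological measure corresponding to `ρ` on an open set. -/
noncomputable def qiOpen [TopologicalSpace X] (ρ : C_c(X, ℝ) → ℝ) (U : Set X) : ℝ≥0∞ :=
  ⨆ (f : C_c(X, ℝ)) (_ : (∀ x, 0 ≤ f x ∧ f x ≤ 1) ∧ tsupport f ⊆ U), ENNReal.ofReal (ρ f)

open Classical in
/-- The topological measure corresponding to a quasi-integral `ρ`:
on open sets given by `qiOpen`, on other (closed) sets by outer regularity. -/
noncomputable def qiMeas [TopologicalSpace X] (ρ : C_c(X, ℝ) → ℝ) (A : Set X) : ℝ≥0∞ :=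
  if IsOpen A then qiOpen ρ A
  else ⨅ (U : Set X) (_ : IsOpen U ∧ A ⊆ U), qiOpen ρ U

/-- A topological measure on `X` (as a set function on all sets; only its values on
open and closed sets are constrained/meaningful). -/
def IsTopMeasure [TopologicalSpace X] (μ : Set X → ℝ≥0∞) : Prop :=
  (∀ A B : Set X, Disjoint A B → (IsCompact A ∨ IsOpen A) → (IsCompact B ∨ IsOpen B) →
      (IsCompact (A ∪ B) ∨ IsOpen (A ∪ B)) → μ (A ∪ B) = μ A + μ B) ∧
  (∀ U : Set X, IsOpen U → μ U = ⨆ (K : Set X) (_ : IsCompact K ∧ K ⊆ U), μ K) ∧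
  (∀ F : Set X, IsClosed F → μ F = ⨅ (U : Set X) (_ : IsOpen U ∧ F ⊆ U), μ U)

/-- A simple topological measure: assumes only the values 0 and 1 on open and closed sets. -/
def IsSimpleTM [TopologicalSpace X] (μ : Set X → ℝ≥0∞) : Prop :=
  IsTopMeasure μ ∧ ∀ A : Set X, IsOpen A ∨ IsClosed A → μ A = 0 ∨ μ A = 1

/-- A simple quasi-integral: its corresponding topological measure assumes only 0 and 1. -/
def IsSimpleQI [TopologicalSpace X] (ρ : C_c(X, ℝ) → ℝ) : Prop :=
  ∀ A : Set X, IsOpen A ∨ IsClosed A → qiMeas ρ A = 0 ∨ qiMeas ρ A = 1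

/-- An almost simple quasi-integral: its corresponding topological measure is a positive
scalar multiple of a simple topological measure. -/
def IsAlmostSimpleQI [TopologicalSpace X] (ρ : C_c(X, ℝ) → ℝ) : Prop :=
  ∃ (c : ℝ≥0∞) (μ' : Set X → ℝ≥0∞), 0 < c ∧ c ≠ ∞ ∧ IsSimpleTM μ' ∧
    ∀ A : Set X, IsOpen A ∨ IsClosed A → qiMeas ρ A = c * μ' A

/-- The composition `φ ∘ f` as an element of `C_c(X, ℝ)`, for continuous `φ` with `φ 0 = 0`. -/
noncomputable def compCc [TopologicalSpace X] (φ : C(ℝ, ℝ)) (hφ : φ 0 = 0)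
    (f : C_c(X, ℝ)) : C_c(X, ℝ) :=
  ⟨⟨fun x => φ (f x), φ.continuous.comp f.continuous⟩, f.hasCompactSupport'.comp_left hφ⟩

section Products

variable [TopologicalSpace X] [TopologicalSpace Y]

/-- The section `f_y ∈ C_c(X)` of `f ∈ C_c(X × Y)`, `f_y (x) = f (x, y)`. -/
noncomputable def fiberY [T2Space X] (f : C_c(X × Y, ℝ)) (y : Y) : C_c(X, ℝ) :=
  ⟨⟨fun x => f (x, y), f.continuous.comp (continuous_id.prodMk continuous_const)⟩,
    HasCompactSupport.intro (f.hasCompactSupport'.image continuous_fst)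
      (fun x hx => by
        by_contra h
        exact hx ⟨(x, y), subset_tsupport _ h, rfl⟩)⟩

/-- The section `f_x ∈ C_c(Y)` of `f ∈ C_c(X × Y)`, `f_x (y) = f (x, y)`. -/
noncomputable def fiberX [T2Space Y] (f : C_c(X × Y, ℝ)) (x : X) : C_c(Y, ℝ) :=
  ⟨⟨fun y => f (x, y), f.continuous.comp (continuous_const.prodMk continuous_id)⟩,
    HasCompactSupport.intro (f.hasCompactSupport'.image continuous_snd)
      (fun y hy => by
        by_contra h
        exact hy ⟨(x, y), subset_tsupport _ h, rfl⟩)⟩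

/-- `T_ρ(f) (y) = ρ (f_y)` as a bare function on `Y`. -/
noncomputable def Tmap [T2Space X] (ρ : C_c(X, ℝ) → ℝ) (f : C_c(X × Y, ℝ)) : Y → ℝ :=
  fun y => ρ (fiberY f y)

/-- `S_η(f) (x) = η (f_x)` as a bare function on `X`. -/
noncomputable def Smap [T2Space Y] (η : C_c(Y, ℝ) → ℝ) (f : C_c(X × Y, ℝ)) : X → ℝ :=
  fun x => η (fiberX f x)

open Classical in
/-- `T_ρ(f)` as an element of `C_c(Y, ℝ)` (when `ρ` is a quasi-integral, `T_ρ(f)` is indeed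
continuous with compact support, and this definition takes the first branch). -/
noncomputable def TCc [T2Space X] (ρ : C_c(X, ℝ) → ℝ) (f : C_c(X × Y, ℝ)) : C_c(Y, ℝ) :=
  if h : Continuous (Tmap ρ f) ∧ HasCompactSupport (Tmap ρ f)
  then ⟨⟨Tmap ρ f, h.1⟩, h.2⟩ else 0

open Classical in
/-- `S_η(f)` as an element of `C_c(X, ℝ)`. -/
noncomputable def SCc [T2Space Y] (η : C_c(Y, ℝ) → ℝ) (f : C_c(X × Y, ℝ)) : C_c(X, ℝ) :=
  if h : Continuous (Smap η f) ∧ HasCompactSupport (Smap η f)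
  then ⟨⟨Smap η f, h.1⟩, h.2⟩ else 0

/-- The repeated quasi-integral `(η × ρ) (f) = η (T_ρ (f))`. -/
noncomputable def prodQI [T2Space X] (η : C_c(Y, ℝ) → ℝ) (ρ : C_c(X, ℝ) → ℝ) :
    C_c(X × Y, ℝ) → ℝ := fun f => η (TCc ρ f)

/-- The repeated quasi-integral `(ρ × η) (f) = ρ (S_η (f))`. -/
noncomputable def prodQI' [T2Space Y] (ρ : C_c(X, ℝ) → ℝ) (η : C_c(Y, ℝ) → ℝ) :
    C_c(X × Y, ℝ) → ℝ := fun f => ρ (SCc η f)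

/-- The tensor product `(g ⊗ h) (x, y) = g (x) * h (y)` as an element of `C_c(X × Y, ℝ)`. -/
noncomputable def tensor (g : C_c(X, ℝ)) (h : C_c(Y, ℝ)) : C_c(X × Y, ℝ) :=
  ⟨⟨fun p => g p.1 * h p.2,
      (g.continuous.comp continuous_fst).mul (h.continuous.comp continuous_snd)⟩,
    HasCompactSupport.intro' (g.hasCompactSupport'.prod h.hasCompactSupport')
      ((isClosed_tsupport _).prod (isClosed_tsupport _))
      (fun p hp => by
        rcases not_and_or.mp (by simpa [Set.mem_prod] using hp) with h1 | h1
        · simp [image_eq_zero_of_notMem_tsupport h1]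
        · simp [image_eq_zero_of_notMem_tsupport h1])⟩

end Products

/-- A topological measure is subadditive (equivalently, extends to a Borel measure). -/
def IsSubadditiveOnOpens [TopologicalSpace X] (μ : Set X → ℝ≥0∞) : Prop :=
  ∀ U V : Set X, IsOpen U → IsOpen V → μ (U ∪ V) ≤ μ U + μ V

/-- `μ` is a positive scalar multiple of a point mass `δ_{x₀}` (on open and closed sets). -/
def IsPointMassMultiple [TopologicalSpace X] (μ : Set X → ℝ≥0∞) : Prop :=
  ∃ (c : ℝ≥0∞) (x₀ : X), 0 < c ∧ c ≠ ∞ ∧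
    ∀ A : Set X, IsOpen A ∨ IsClosed A →
      μ A = c * A.indicator (fun _ => (1 : ℝ≥0∞)) x₀

end QLF

namespace QLF

section AuxToolkit

variable {X : Type*}

/-! ### toolkit -/

noncomputable def clf : ℝ → ℝ := fun t => min (max t 0) 1

lemma clf_cont : Continuous clf := (continuous_id.max continuous_const).min continuous_const
lemma clf_zero : clf 0 = 0 := by simp [clf]
lemma clf_nonneg (t : ℝ) : 0 ≤ clf t := le_min (le_max_right _ _) zero_le_one
lemma clf_le_one (t : ℝ) : clf t ≤ 1 := min_le_right _ _
lemma clf_mono {s t : ℝ} (h : s ≤ t) : clf s ≤ clf t :=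
  min_le_min (max_le_max h le_rfl) le_rfl
lemma clf_of_nonpos {t : ℝ} (h : t ≤ 0) : clf t = 0 := by
  simp [clf, max_eq_right h]
lemma clf_of_one_le {t : ℝ} (h : 1 ≤ t) : clf t = 1 := by
  have h0 : (0:ℝ) ≤ t := zero_le_one.trans h
  simp [clf, max_eq_left h0, min_eq_right h]
lemma clf_of_mem {t : ℝ} (h0 : 0 ≤ t) (h1 : t ≤ 1) : clf t = t := by
  simp [clf, max_eq_left h0, min_eq_left h1]
lemma clf_le_max (t : ℝ) : clf t ≤ max t 0 := min_le_left _ _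

noncomputable def Ef (α β : ℝ) : ℝ → ℝ := fun t => clf ((t - α) / (β - α))

lemma Ef_cont (α β : ℝ) : Continuous (Ef α β) :=
  clf_cont.comp ((continuous_id.sub continuous_const).div_const _)
lemma Ef_nonneg (α β t : ℝ) : 0 ≤ Ef α β t := clf_nonneg _
lemma Ef_le_one (α β t : ℝ) : Ef α β t ≤ 1 := clf_le_one _
lemma Ef_of_le {α β t : ℝ} (hαβ : α < β) (h : t ≤ α) : Ef α β t = 0 :=
  clf_of_nonpos (div_nonpos_of_nonpos_of_nonneg (by linarith) (by linarith))
lemma Ef_of_ge {α β t : ℝ} (hαβ : α < β) (h : β ≤ t) : Ef α β t = 1 :=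
  clf_of_one_le ((one_le_div (by linarith)).2 (by linarith))
lemma Ef_zero {α β : ℝ} (hα : 0 ≤ α) (hαβ : α < β) : Ef α β 0 = 0 :=
  Ef_of_le hαβ hα

noncomputable def sqf : ℝ → ℝ := fun t => Real.sqrt (clf t)
lemma sqf_cont : Continuous sqf := Real.continuous_sqrt.comp clf_cont
lemma sqf_zero : sqf 0 = 0 := by simp [sqf, clf_zero]
lemma sqf_nonneg (t : ℝ) : 0 ≤ sqf t := Real.sqrt_nonneg _

noncomputable def cmulf (c : ℝ) : ℝ → ℝ := fun t => clf (c * t)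
lemma cmulf_cont (c : ℝ) : Continuous (cmulf c) :=
  clf_cont.comp (continuous_const.mul continuous_id)
lemma cmulf_zero (c : ℝ) : cmulf c 0 = 0 := by simp [cmulf, clf_zero]

/-! ### cc machinery -/

section CC
variable [TopologicalSpace X]

noncomputable def cc (φ : ℝ → ℝ) (hc : Continuous φ) (h0 : φ 0 = 0) (f : C_c(X, ℝ)) :
    C_c(X, ℝ) := compCc ⟨φ, hc⟩ h0 f

@[simp] lemma cc_apply (φ : ℝ → ℝ) (hc : Continuous φ) (h0 : φ 0 = 0) (f : C_c(X, ℝ)) (x : X) :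
    cc φ hc h0 f x = φ (f x) := rfl

lemma inB_cc (φ : ℝ → ℝ) (hc : Continuous φ) (h0 : φ 0 = 0) (f : C_c(X, ℝ)) :
    InB f (cc φ hc h0 f) := ⟨⟨φ, hc⟩, h0, fun _ => rfl⟩

lemma cc_cc (φ ψ : ℝ → ℝ) (hcφ : Continuous φ) (h0φ : φ 0 = 0) (hcψ : Continuous ψ)
    (h0ψ : ψ 0 = 0) (f : C_c(X, ℝ)) :
    cc φ hcφ h0φ (cc ψ hcψ h0ψ f) =
      cc (φ ∘ ψ) (hcφ.comp hcψ) (by simp [Function.comp, h0ψ, h0φ]) f :=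
  ext fun _ => rfl

lemma tsupport_cc_subset (φ : ℝ → ℝ) (hc : Continuous φ) (h0 : φ 0 = 0) (f : C_c(X, ℝ)) :
    tsupport (cc φ hc h0 f) ⊆ tsupport f := by
  apply closure_mono
  intro x hx
  simp only [Function.mem_support] at hx ⊢
  intro h
  exact hx (by simp [h, h0])

variable {ρ : C_c(X, ℝ) → ℝ}

lemma rho_zero (hρ : IsQuasiIntegral ρ) : ρ 0 = 0 := by
  have := hρ.smul 0 0
  simpa using this

lemma rho_cc_nonneg (hρ : IsQuasiIntegral ρ) {φ : ℝ → ℝ} {hc : Continuous φ} {h0 : φ 0 = 0}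
    {f : C_c(X, ℝ)} (hnn : ∀ x, 0 ≤ φ (f x)) : 0 ≤ ρ (cc φ hc h0 f) :=
  hρ.pos _ fun x => hnn x

lemma rho_cc_split (hρ : IsQuasiIntegral ρ) {χ φ ψ : ℝ → ℝ} {hcχ : Continuous χ}
    {h0χ : χ 0 = 0} {hcφ : Continuous φ} {h0φ : φ 0 = 0} {hcψ : Continuous ψ} {h0ψ : ψ 0 = 0}
    {f : C_c(X, ℝ)} (hsum : ∀ x, χ (f x) = φ (f x) + ψ (f x)) :
    ρ (cc χ hcχ h0χ f) = ρ (cc φ hcφ h0φ f) + ρ (cc ψ hcψ h0ψ f) := by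
  have he : cc χ hcχ h0χ f = cc φ hcφ h0φ f + cc ψ hcψ h0ψ f := by
    apply ext
    intro x
    simp only [cc_apply, coe_add, Pi.add_apply]
    exact hsum x
  rw [he]
  exact hρ.add f _ _ (inB_cc _ _ _ _) (inB_cc _ _ _ _)

lemma rho_cc_mono (hρ : IsQuasiIntegral ρ) {φ ψ : ℝ → ℝ} {hcφ : Continuous φ} {h0φ : φ 0 = 0}
    {hcψ : Continuous ψ} {h0ψ : ψ 0 = 0} {f : C_c(X, ℝ)}
    (hle : ∀ x, φ (f x) ≤ ψ (f x)) :
    ρ (cc φ hcφ h0φ f) ≤ ρ (cc ψ hcψ h0ψ f) := by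
  have hsplit := rho_cc_split hρ (χ := ψ) (φ := φ) (ψ := fun t => ψ t - φ t)
    (hcχ := hcψ) (h0χ := h0ψ) (hcφ := hcφ) (h0φ := h0φ)
    (hcψ := hcψ.sub hcφ) (h0ψ := by simp [h0φ, h0ψ]) (f := f) (fun x => by ring)
  have hpos : 0 ≤ ρ (cc (fun t => ψ t - φ t) (hcψ.sub hcφ) (by simp [h0φ, h0ψ]) f) :=
    rho_cc_nonneg hρ fun x => sub_nonneg.2 (hle x)
  linarith [hsplit, hpos]

end CC

section NS
variable {X : Type*} [TopologicalSpace X] {ρ : C_c(X, ℝ) → ℝ}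

noncomputable def Edf (δ : ℝ) : ℝ → ℝ := fun t => clf ((t - δ) / δ)

lemma Edf_cont (δ : ℝ) : Continuous (Edf δ) :=
  clf_cont.comp ((continuous_id.sub continuous_const).div_const _)
lemma Edf_zero (δ : ℝ) : Edf δ 0 = 0 := by
  rcases eq_or_ne δ 0 with h | h
  · simp [Edf, h, clf_zero]
  · have : (0 - δ) / δ = -1 := by field_simp; ring
    rw [Edf, this]
    exact clf_of_nonpos (by norm_num)
lemma Edf_nonneg (δ t : ℝ) : 0 ≤ Edf δ t := clf_nonneg _
lemma Edf_le_one (δ t : ℝ) : Edf δ t ≤ 1 := clf_le_one _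
lemma Edf_of_le {δ t : ℝ} (hδ : 0 < δ) (h : t ≤ δ) : Edf δ t = 0 :=
  clf_of_nonpos (div_nonpos_of_nonpos_of_nonneg (by linarith) (by linarith))
lemma Edf_of_ge {δ t : ℝ} (hδ : 0 < δ) (h : 2 * δ ≤ t) : Edf δ t = 1 :=
  clf_of_one_le ((one_le_div hδ).2 (by linarith))

lemma min_add_max_sub (a σ : ℝ) : min a σ + max (a - σ) 0 = a := by
  rcases le_total a σ with h | h
  · rw [min_eq_left h, max_eq_right (by linarith)]; ring
  · rw [min_eq_right h, max_eq_left (by linarith)]; ring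

lemma min_le_sqrt {σ : ℝ} (hσ : 0 ≤ σ) (t : ℝ) :
    min (clf t) σ ≤ Real.sqrt σ * sqf t := by
  have hc : 0 ≤ clf t := clf_nonneg t
  rcases le_total (clf t) σ with h | h
  · calc min (clf t) σ = clf t := min_eq_left h
      _ = Real.sqrt (clf t) * Real.sqrt (clf t) := (Real.mul_self_sqrt hc).symm
      _ ≤ Real.sqrt σ * Real.sqrt (clf t) :=
          mul_le_mul_of_nonneg_right (Real.sqrt_le_sqrt h) (Real.sqrt_nonneg _)
      _ = Real.sqrt σ * sqf t := rfl
  · calc min (clf t) σ = σ := min_eq_right h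
      _ = Real.sqrt σ * Real.sqrt σ := (Real.mul_self_sqrt hσ).symm
      _ ≤ Real.sqrt σ * Real.sqrt (clf t) :=
          mul_le_mul_of_nonneg_left (Real.sqrt_le_sqrt h) (Real.sqrt_nonneg _)
      _ = Real.sqrt σ * sqf t := rfl

lemma max_sub_le_Edf {δ : ℝ} (hδ : 0 < δ) (t : ℝ) :
    max (clf t - 2 * δ) 0 ≤ Edf δ t := by
  rcases le_or_gt t (2 * δ) with h | h
  · have h1 : clf t ≤ 2 * δ := (clf_le_max t).trans (max_le h (by linarith))
    rw [max_eq_right (by linarith)]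
    exact Edf_nonneg δ t
  · rw [Edf_of_ge hδ h.le]
    exact max_le (by linarith [clf_le_one t]) zero_le_one

/-- The tail lemma: a candidate with positive integral has mass away from level 0. -/
lemma tail (hρ : IsQuasiIntegral ρ) {k : C_c(X, ℝ)} (hk01 : ∀ x, 0 ≤ k x ∧ k x ≤ 1)
    (hk : 0 < ρ k) :
    ∃ δ : ℝ, 0 < δ ∧ δ ≤ 1 ∧ 0 < ρ (cc (Edf δ) (Edf_cont δ) (Edf_zero δ) k) := by
  by_contra hcon
  push_neg at hcon
  have hkcc : cc clf clf_cont clf_zero k = k :=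
    ext fun x => clf_of_mem (hk01 x).1 (hk01 x).2
  set C := ρ (cc sqf sqf_cont sqf_zero k) with hC
  have hC0 : 0 ≤ C := rho_cc_nonneg hρ fun x => sqf_nonneg _
  have key : ∀ δ : ℝ, 0 < δ → δ ≤ 1 → ρ k ≤ Real.sqrt (2 * δ) * C := by
    intro δ hδ hδ1
    have hzero : ρ (cc (Edf δ) (Edf_cont δ) (Edf_zero δ) k) = 0 :=
      le_antisymm (hcon δ hδ hδ1) (rho_cc_nonneg hρ fun x => Edf_nonneg _ _)
    have hminc : Continuous fun t => min (clf t) (2 * δ) := clf_cont.min continuous_const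
    have hmin0 : (fun t => min (clf t) (2 * δ)) 0 = 0 := by
      simp only [clf_zero]
      exact min_eq_left (by linarith)
    have hmaxc : Continuous fun t => max (clf t - 2 * δ) 0 :=
      (clf_cont.sub continuous_const).max continuous_const
    have hmax0 : (fun t => max (clf t - 2 * δ) 0) 0 = 0 := by
      simp only [clf_zero]
      exact max_eq_right (by linarith)
    have hsplit : ρ (cc clf clf_cont clf_zero k) =
        ρ (cc _ hminc hmin0 k) + ρ (cc _ hmaxc hmax0 k) :=
      rho_cc_split hρ fun x => (min_add_max_sub _ _).symm
    have hmax_le : ρ (cc _ hmaxc hmax0 k) ≤ 0 := by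
      calc ρ (cc _ hmaxc hmax0 k) ≤ ρ (cc (Edf δ) (Edf_cont δ) (Edf_zero δ) k) :=
            rho_cc_mono hρ fun x => max_sub_le_Edf hδ (k x)
        _ = 0 := hzero
    have hmax_eq : ρ (cc _ hmaxc hmax0 k) = 0 :=
      le_antisymm hmax_le (rho_cc_nonneg hρ fun x => le_max_right _ _)
    have hsc : Continuous fun t => Real.sqrt (2 * δ) * sqf t := continuous_const.mul sqf_cont
    have hs0 : (fun t => Real.sqrt (2 * δ) * sqf t) 0 = 0 := by simp [sqf_zero]
    have hmin_le : ρ (cc _ hminc hmin0 k) ≤ ρ (cc _ hsc hs0 k) :=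
      rho_cc_mono hρ fun x => min_le_sqrt (by linarith) (k x)
    have hsmul : cc _ hsc hs0 k = Real.sqrt (2 * δ) • cc sqf sqf_cont sqf_zero k := by
      apply ext
      intro x
      simp [coe_smul, Pi.smul_apply, smul_eq_mul]
    calc ρ k = ρ (cc clf clf_cont clf_zero k) := by rw [hkcc]
      _ = ρ (cc _ hminc hmin0 k) + ρ (cc _ hmaxc hmax0 k) := hsplit
      _ = ρ (cc _ hminc hmin0 k) := by rw [hmax_eq, add_zero]
      _ ≤ ρ (cc _ hsc hs0 k) := hmin_le
      _ = Real.sqrt (2 * δ) * C := by rw [hsmul, hρ.smul]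
  set q := ρ k with hq
  set r := q / (2 * (C + 1)) with hr
  have hrpos : 0 < r := div_pos hk (by linarith)
  have hδpos : 0 < min (1/2 : ℝ) (r ^ 2 / 2) := lt_min (by norm_num) (by positivity)
  have hδ1 : min (1/2 : ℝ) (r ^ 2 / 2) ≤ 1 := (min_le_left _ _).trans (by norm_num)
  have h2δ : 2 * min (1/2 : ℝ) (r ^ 2 / 2) ≤ r ^ 2 := by
    have := min_le_right (1/2 : ℝ) (r ^ 2 / 2)
    linarith
  have hsq : Real.sqrt (2 * min (1/2 : ℝ) (r ^ 2 / 2)) ≤ r := by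
    calc Real.sqrt (2 * min (1/2 : ℝ) (r ^ 2 / 2)) ≤ Real.sqrt (r ^ 2) :=
          Real.sqrt_le_sqrt h2δ
      _ = r := Real.sqrt_sq hrpos.le
  have hfin : q ≤ r * C := by
    calc q ≤ Real.sqrt (2 * min (1/2 : ℝ) (r ^ 2 / 2)) * C := key _ hδpos hδ1
      _ ≤ r * C := mul_le_mul_of_nonneg_right hsq hC0
  have : q * (2 * (C + 1)) ≤ q * C := by
    rw [hr] at hfin
    rw [div_mul_eq_mul_div, le_div_iff₀ (by linarith)] at hfin
    linarith
  nlinarith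

/-- Purity at level 1 (after renormalisation): compositions supported below 3/4 vanish. -/
def PureAt (ρ : C_c(X, ℝ) → ℝ) (w : C_c(X, ℝ)) : Prop :=
  ∀ (φ : ℝ → ℝ) (hc : Continuous φ) (h0 : φ 0 = 0), (∀ t, 0 ≤ φ t) →
    (∀ t, 3/4 ≤ t → φ t = 0) → ρ (cc φ hc h0 w) = 0

/-- The negation of the splitting property. -/
def NoSplit (ρ : C_c(X, ℝ) → ℝ) : Prop :=
  ∀ (f : C_c(X, ℝ)) (φ₁ φ₂ : ℝ → ℝ) (hc₁ : Continuous φ₁) (h₁ : φ₁ 0 = 0)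
    (hc₂ : Continuous φ₂) (h₂ : φ₂ 0 = 0), (∀ t, 0 ≤ φ₁ t) → (∀ t, 0 ≤ φ₂ t) →
    (∀ t, φ₁ t * φ₂ t = 0) → 0 < ρ (cc φ₁ hc₁ h₁ f) → ρ (cc φ₂ hc₂ h₂ f) ≤ 0

lemma pure_exists (hρ : IsQuasiIntegral ρ) (hns : NoSplit ρ) {k : C_c(X, ℝ)}
    (hk01 : ∀ x, 0 ≤ k x ∧ k x ≤ 1) (hk : 0 < ρ k) :
    ∃ w : C_c(X, ℝ), (∀ x, 0 ≤ w x ∧ w x ≤ 1) ∧ tsupport w ⊆ tsupport k ∧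
      ρ k ≤ ρ w ∧ PureAt ρ w := by
  obtain ⟨δ, hδ, hδ1, hpos⟩ := tail hρ hk01 hk
  have hc1 : 1 ≤ 1 / δ := by
    rw [le_div_iff₀ hδ]; linarith
  refine ⟨cc (cmulf (1/δ)) (cmulf_cont _) (cmulf_zero _) k,
    fun x => ⟨clf_nonneg _, clf_le_one _⟩, tsupport_cc_subset _ _ _ _, ?_, ?_⟩
  · have hkcc : cc clf clf_cont clf_zero k = k :=
      ext fun x => clf_of_mem (hk01 x).1 (hk01 x).2
    calc ρ k = ρ (cc clf clf_cont clf_zero k) := by rw [hkcc]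
      _ ≤ ρ (cc (cmulf (1/δ)) (cmulf_cont _) (cmulf_zero _) k) :=
          rho_cc_mono hρ fun x => clf_mono (le_mul_of_one_le_left (hk01 x).1 hc1)
  · intro φ hc h0 hnn hvan
    have he : cc φ hc h0 (cc (cmulf (1/δ)) (cmulf_cont _) (cmulf_zero _) k) =
        cc (φ ∘ cmulf (1/δ)) (hc.comp (cmulf_cont _)) (by simp [Function.comp, cmulf_zero, h0]) k :=
      cc_cc _ _ _ _ _ _ _
    rw [he]
    refine le_antisymm ?_ (rho_cc_nonneg hρ fun x => hnn _)
    refine hns k (Edf δ) (φ ∘ cmulf (1/δ)) (Edf_cont δ) (Edf_zero δ) _ _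
      (fun t => Edf_nonneg δ t) (fun t => hnn _) ?_ hpos
    intro t
    rcases le_or_gt t δ with h | h
    · rw [Edf_of_le hδ h, zero_mul]
    · have h1 : (1:ℝ) ≤ 1/δ * t := by
        rw [div_mul_eq_mul_div, le_div_iff₀ hδ]
        linarith
      have : (φ ∘ cmulf (1/δ)) t = 0 := by
        simp only [Function.comp_apply, cmulf, clf_of_one_le h1]
        exact hvan 1 (by norm_num)
      rw [this, mul_zero]

end NS

section NS2
variable {X : Type*} [TopologicalSpace X] {ρ : C_c(X, ℝ) → ℝ}

noncomputable def philow : ℝ → ℝ := fun t => min (clf t) (clf (3 - 4 * t))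

lemma philow_cont : Continuous philow :=
  clf_cont.min (clf_cont.comp (continuous_const.sub (continuous_const.mul continuous_id)))
lemma philow_zero : philow 0 = 0 := by
  simp only [philow, mul_zero, sub_zero, clf_zero]
  exact min_eq_left (clf_nonneg 3)
lemma philow_nonneg (t : ℝ) : 0 ≤ philow t := le_min (clf_nonneg _) (clf_nonneg _)
lemma philow_vanish (t : ℝ) (h : 3/4 ≤ t) : philow t = 0 := by
  rw [philow, clf_of_nonpos (t := 3 - 4 * t) (by linarith)]
  exact min_eq_right (clf_nonneg _)

lemma clf_le_philow_E12 {s : ℝ} (h0 : 0 ≤ s) (h1 : s ≤ 1) :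
    clf s ≤ philow s + Ef (1/2) (3/4) s := by
  rw [clf_of_mem h0 h1]
  have harg : Ef (1/2) (3/4) s = clf (4 * s - 2) := by
    rw [Ef]
    congr 1
    rw [div_eq_iff (by norm_num)]
    ring
  rw [harg, philow, clf_of_mem h0 h1]
  rcases le_total s (3/5) with hA | hB
  · have hmin : min s (clf (3 - 4 * s)) = s := by
      apply min_eq_left
      rcases le_total s (1/2) with h | h
      · rw [clf_of_one_le (by linarith)]; linarith
      · rw [clf_of_mem (by linarith) (by linarith)]; linarith
    rw [hmin]
    linarith [clf_nonneg (4 * s - 2)]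
  · rcases le_total s (3/4) with hB1 | hB2
    · rw [clf_of_mem (t := 3 - 4 * s) (by linarith) (by linarith),
        clf_of_mem (t := 4 * s - 2) (by linarith) (by linarith),
        min_eq_right (by linarith)]
      linarith
    · rw [clf_of_one_le (t := 4 * s - 2) (by linarith)]
      have : 0 ≤ min s (clf (3 - 4 * s)) := le_min h0 (clf_nonneg _)
      linarith

/-- A pure function has all its mass near level one. -/
lemma pure_mass (hρ : IsQuasiIntegral ρ) {w : C_c(X, ℝ)} (hw01 : ∀ x, 0 ≤ w x ∧ w x ≤ 1)
    (hp : PureAt ρ w) :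
    ρ w ≤ ρ (cc (Ef (1/2) (3/4)) (Ef_cont _ _) (Ef_zero (by norm_num) (by norm_num)) w) := by
  have hwcc : cc clf clf_cont clf_zero w = w :=
    ext fun x => clf_of_mem (hw01 x).1 (hw01 x).2
  have hsumc : Continuous fun t => philow t + Ef (1/2) (3/4) t :=
    philow_cont.add (Ef_cont _ _)
  have hsum0 : (fun t => philow t + Ef (1/2) (3/4) t) 0 = 0 := by
    show philow 0 + Ef (1/2) (3/4) 0 = 0
    rw [philow_zero, Ef_zero (by norm_num) (by norm_num), add_zero]
  have h1 : ρ (cc clf clf_cont clf_zero w) ≤ ρ (cc _ hsumc hsum0 w) :=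
    rho_cc_mono hρ fun x => clf_le_philow_E12 (hw01 x).1 (hw01 x).2
  have h2 : ρ (cc _ hsumc hsum0 w) =
      ρ (cc philow philow_cont philow_zero w) +
      ρ (cc (Ef (1/2) (3/4)) (Ef_cont _ _) (Ef_zero (by norm_num) (by norm_num)) w) :=
    rho_cc_split hρ fun x => rfl
  have h3 : ρ (cc philow philow_cont philow_zero w) = 0 :=
    hp philow philow_cont philow_zero philow_nonneg philow_vanish
  calc ρ w = ρ (cc clf clf_cont clf_zero w) := by rw [hwcc]
    _ ≤ ρ (cc _ hsumc hsum0 w) := h1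
    _ = ρ (cc philow philow_cont philow_zero w) + _ := h2
    _ = _ := by rw [h3, zero_add]

noncomputable def psif : ℝ → ℝ := fun t => clf ((5 * t - 1) / 4)
lemma psif_cont : Continuous psif :=
  clf_cont.comp (((continuous_const.mul continuous_id).sub continuous_const).div_const _)
lemma psif_zero : psif 0 = 0 := by
  rw [psif]
  norm_num
  exact clf_of_nonpos (by norm_num)

noncomputable def Bf : ℝ → ℝ := fun t => clf (10 * t - 2)
lemma Bf_cont : Continuous Bf :=
  clf_cont.comp ((continuous_const.mul continuous_id).sub continuous_const)
lemma Bf_zero : Bf 0 = 0 := by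
  rw [Bf]
  norm_num
  exact clf_of_nonpos (by norm_num)

noncomputable def Df : ℝ → ℝ := fun t => clf (40 * t) - clf (10 * t - 2)
lemma Df_cont : Continuous Df :=
  (clf_cont.comp (continuous_const.mul continuous_id)).sub Bf_cont
lemma Df_zero : Df 0 = 0 := by
  rw [Df]
  norm_num
  rw [clf_zero, clf_of_nonpos (by norm_num : (-2:ℝ) ≤ 0)]
  ring
lemma Df_nonneg (t : ℝ) : 0 ≤ Df t := by
  rcases le_or_gt t 0 with h | h
  · rw [Df, clf_of_nonpos (by linarith), clf_of_nonpos (by linarith)]; norm_num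
  · exact sub_nonneg.2 (clf_mono (by linarith))
lemma Df_vanish (t : ℝ) (h : 3/10 ≤ t) : Df t = 0 := by
  rw [Df, clf_of_one_le (by linarith), clf_of_one_le (by linarith)]
  ring

/-- Coupling a pure function to a dominating plateau. -/
lemma couple_one (hρ : IsQuasiIntegral ρ) (hns : NoSplit ρ) {w : C_c(X, ℝ)}
    (hw01 : ∀ x, 0 ≤ w x ∧ w x ≤ 1) (hp : PureAt ρ w) (hw : 0 < ρ w)
    (W : C_c(X, ℝ)) (hW01 : ∀ x, 0 ≤ W x ∧ W x ≤ 1) (hW1 : ∀ x ∈ tsupport w, W x = 1) :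
    ρ (cc (cmulf 8) (cmulf_cont 8) (cmulf_zero 8) w) =
      ρ (cc (cmulf 8) (cmulf_cont 8) (cmulf_zero 8) W) := by
  set u : C_c(X, ℝ) := (1/5 : ℝ) • W + (4/5 : ℝ) • w with hu_def
  have hu : ∀ x, u x = 1/5 * W x + 4/5 * w x := by
    intro x
    simp [hu_def, coe_add, coe_smul, Pi.add_apply, Pi.smul_apply, smul_eq_mul]
  have hu01 : ∀ x, 0 ≤ u x ∧ u x ≤ 1 := by
    intro x
    rw [hu x]
    constructor
    · nlinarith [(hW01 x).1, (hw01 x).1]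
    · nlinarith [(hW01 x).2, (hw01 x).2]
  have hpsi : ∀ x, psif (u x) = w x := by
    intro x
    by_cases hx : x ∈ tsupport w
    · rw [psif, hu x, hW1 x hx]
      have : (5 * (1/5 * 1 + 4/5 * w x) - 1) / 4 = w x := by ring
      rw [this]
      exact clf_of_mem (hw01 x).1 (hw01 x).2
    · have hwx : w x = 0 := image_eq_zero_of_notMem_tsupport hx
      rw [psif, hu x, hwx]
      have harg : (5 * (1/5 * W x + 4/5 * 0) - 1) / 4 = (W x - 1) / 4 := by ring
      rw [harg]
      exact clf_of_nonpos (div_nonpos_of_nonpos_of_nonneg (by linarith [(hW01 x).2]) (by norm_num))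
  have hphiW : ∀ x, cmulf 5 (u x) = W x := by
    intro x
    by_cases hx : x ∈ tsupport w
    · rw [cmulf, hu x, hW1 x hx]
      exact clf_of_one_le (by nlinarith [(hw01 x).1])
    · have hwx : w x = 0 := image_eq_zero_of_notMem_tsupport hx
      rw [cmulf, hu x, hwx]
      have harg : 5 * (1/5 * W x + 4/5 * 0) = W x := by ring
      rw [harg]
      exact clf_of_mem (hW01 x).1 (hW01 x).2
  -- mass of w at high level, transported to u
  have hE12w : 0 < ρ (cc (Ef (1/2) (3/4)) (Ef_cont _ _) (Ef_zero (by norm_num) (by norm_num)) w) :=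
    lt_of_lt_of_le hw (pure_mass hρ hw01 hp)
  have hcompc : Continuous fun t => Ef (1/2) (3/4) (psif t) := (Ef_cont _ _).comp psif_cont
  have hcomp0 : (fun t => Ef (1/2) (3/4) (psif t)) 0 = 0 := by
    show Ef (1/2) (3/4) (psif 0) = 0
    rw [psif_zero]
    exact Ef_zero (by norm_num) (by norm_num)
  have htrans : cc (Ef (1/2) (3/4)) (Ef_cont _ _) (Ef_zero (by norm_num) (by norm_num)) w =
      cc _ hcompc hcomp0 u := by
    apply ext
    intro x
    simp only [cc_apply]
    rw [hpsi x]
  have hmono : ρ (cc _ hcompc hcomp0 u) ≤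
      ρ (cc (Ef (3/10) (3/5)) (Ef_cont _ _) (Ef_zero (by norm_num) (by norm_num)) u) := by
    apply rho_cc_mono hρ
    intro x
    set s := u x with hs
    have hs0 : 0 ≤ s := (hu01 x).1
    have hs1 : s ≤ 1 := (hu01 x).2
    rcases le_or_gt s (3/5) with h | h
    · have hψ : psif s ≤ 1/2 := by
        rw [psif]
        calc clf ((5 * s - 1) / 4) ≤ clf (1/2) := clf_mono (by linarith)
          _ = 1/2 := clf_of_mem (by norm_num) (by norm_num)
      rw [Ef_of_le (by norm_num) hψ]
      exact Ef_nonneg _ _ _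
    · rw [Ef_of_ge (by norm_num) h.le]
      exact Ef_le_one _ _ _
  have hEhi : 0 < ρ (cc (Ef (3/10) (3/5)) (Ef_cont _ _) (Ef_zero (by norm_num) (by norm_num)) u) := by
    apply lt_of_lt_of_le hE12w
    rw [htrans]
    exact hmono
  -- concentration of u above 3/10
  have hconc : ∀ (φ : ℝ → ℝ) (hc : Continuous φ) (h0 : φ 0 = 0), (∀ t, 0 ≤ φ t) →
      (∀ t, 3/10 ≤ t → φ t = 0) → ρ (cc φ hc h0 u) = 0 := by
    intro φ hc h0 hnn hvan
    refine le_antisymm ?_ (rho_cc_nonneg hρ fun x => hnn _)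
    refine hns u (Ef (3/10) (3/5)) φ (Ef_cont _ _) (Ef_zero (by norm_num) (by norm_num)) hc h0
      (fun t => Ef_nonneg _ _ _) hnn ?_ hEhi
    intro t
    rcases le_or_gt t (3/10) with h | h
    · rw [Ef_of_le (by norm_num) h, zero_mul]
    · rw [hvan t h.le, mul_zero]
  have hD : ρ (cc Df Df_cont Df_zero u) = 0 :=
    hconc Df Df_cont Df_zero Df_nonneg Df_vanish
  have hsplit : ρ (cc (cmulf 40) (cmulf_cont 40) (cmulf_zero 40) u) =
      ρ (cc Bf Bf_cont Bf_zero u) + ρ (cc Df Df_cont Df_zero u) := by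
    apply rho_cc_split hρ
    intro x
    simp only [cmulf, Bf, Df]
    ring
  have hAW : cc (cmulf 40) (cmulf_cont 40) (cmulf_zero 40) u =
      cc (cmulf 8) (cmulf_cont 8) (cmulf_zero 8) W := by
    apply ext
    intro x
    simp only [cc_apply, cmulf]
    by_cases hx : x ∈ tsupport w
    · rw [hu x, hW1 x hx, clf_of_one_le (by nlinarith [(hw01 x).1]),
        clf_of_one_le (by norm_num : (1:ℝ) ≤ 8 * 1)]
    · have hwx : w x = 0 := image_eq_zero_of_notMem_tsupport hx
      rw [hu x, hwx]
      congr 1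
      ring
  have hBw : cc Bf Bf_cont Bf_zero u = cc (cmulf 8) (cmulf_cont 8) (cmulf_zero 8) w := by
    apply ext
    intro x
    simp only [cc_apply, Bf, cmulf]
    by_cases hx : x ∈ tsupport w
    · rw [hu x, hW1 x hx]
      congr 1
      ring
    · have hwx : w x = 0 := image_eq_zero_of_notMem_tsupport hx
      rw [hu x, hwx]
      rw [clf_of_nonpos (by nlinarith [(hW01 x).2]), mul_zero, clf_zero]
  calc ρ (cc (cmulf 8) (cmulf_cont 8) (cmulf_zero 8) w) = ρ (cc Bf Bf_cont Bf_zero u) := by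
        rw [hBw]
    _ = ρ (cc (cmulf 40) (cmulf_cont 40) (cmulf_zero 40) u) := by rw [hsplit, hD, add_zero]
    _ = ρ (cc (cmulf 8) (cmulf_cont 8) (cmulf_zero 8) W) := by rw [hAW]

end NS2

section NS3
variable {X : Type*} [TopologicalSpace X] [LocallyCompactSpace X] [T2Space X]
  {ρ : C_c(X, ℝ) → ℝ}

lemma couple (hρ : IsQuasiIntegral ρ) (hns : NoSplit ρ) {w w' : C_c(X, ℝ)}
    (hw01 : ∀ x, 0 ≤ w x ∧ w x ≤ 1) (hw'01 : ∀ x, 0 ≤ w' x ∧ w' x ≤ 1)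
    (hp : PureAt ρ w) (hp' : PureAt ρ w') (hw : 0 < ρ w) (hw' : 0 < ρ w') :
    ρ (cc (cmulf 8) (cmulf_cont 8) (cmulf_zero 8) w) =
      ρ (cc (cmulf 8) (cmulf_cont 8) (cmulf_zero 8) w') := by
  obtain ⟨W0, hW1, -, hWcs, hW01⟩ :=
    exists_continuous_one_zero_of_isCompact
      (w.hasCompactSupport'.union w'.hasCompactSupport') isClosed_empty (Set.disjoint_empty _)
  set W : C_c(X, ℝ) := ⟨W0, hWcs⟩ with hWdef
  have hW01' : ∀ x, 0 ≤ W x ∧ W x ≤ 1 := fun x => ⟨(hW01 x).1, (hW01 x).2⟩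
  have h1 : ρ (cc (cmulf 8) (cmulf_cont 8) (cmulf_zero 8) w) =
      ρ (cc (cmulf 8) (cmulf_cont 8) (cmulf_zero 8) W) :=
    couple_one hρ hns hw01 hp hw W hW01' fun x hx => hW1 (Set.mem_union_left _ hx)
  have h2 : ρ (cc (cmulf 8) (cmulf_cont 8) (cmulf_zero 8) w') =
      ρ (cc (cmulf 8) (cmulf_cont 8) (cmulf_zero 8) W) :=
    couple_one hρ hns hw'01 hp' hw' W hW01' fun x hx => hW1 (Set.mem_union_right _ hx)
  rw [h1, h2]

lemma qiOpen_pos_elim {U : Set X} (hU : qiOpen ρ U ≠ 0) :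
    ∃ f : C_c(X, ℝ), ((∀ x, 0 ≤ f x ∧ f x ≤ 1) ∧ tsupport f ⊆ U) ∧ 0 < ρ f := by
  by_contra hcon
  push_neg at hcon
  apply hU
  rw [qiOpen]
  apply le_antisymm _ (zero_le)
  refine iSup₂_le fun f hf => ?_
  rw [ENNReal.ofReal_eq_zero.2 (hcon f hf)]

lemma ns_le (hρ : IsQuasiIntegral ρ) (hns : NoSplit ρ) {U V : Set X}
    (hU : qiOpen ρ U ≠ 0) : qiOpen ρ V ≤ qiOpen ρ U := by
  obtain ⟨k₀, hk₀cond, hk₀pos⟩ := qiOpen_pos_elim hU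
  obtain ⟨w₀, hw₀01, hw₀supp, hw₀ge, hw₀pure⟩ := pure_exists hρ hns hk₀cond.1 hk₀pos
  have hw₀pos : 0 < ρ w₀ := lt_of_lt_of_le hk₀pos hw₀ge
  set M := ρ (cc (cmulf 8) (cmulf_cont 8) (cmulf_zero 8) w₀) with hM
  have hUM : ENNReal.ofReal M ≤ qiOpen ρ U := by
    rw [qiOpen]
    refine le_iSup₂_of_le (cc (cmulf 8) (cmulf_cont 8) (cmulf_zero 8) w₀)
      ⟨fun x => ⟨clf_nonneg _, clf_le_one _⟩,
        (tsupport_cc_subset _ _ _ _).trans (hw₀supp.trans hk₀cond.2)⟩ le_rfl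
  rw [qiOpen]
  refine iSup₂_le fun k hk => ?_
  rcases le_or_gt (ρ k) 0 with hρk | hρk
  · rw [ENNReal.ofReal_eq_zero.2 hρk]
    exact zero_le
  obtain ⟨w, hw01, hwsupp, hwge, hwpure⟩ := pure_exists hρ hns hk.1 hρk
  have hwpos : 0 < ρ w := lt_of_lt_of_le hρk hwge
  have hwcc : cc clf clf_cont clf_zero w = w :=
    ext fun x => clf_of_mem (hw01 x).1 (hw01 x).2
  have hchain : ρ k ≤ M := by
    calc ρ k ≤ ρ w := hwge
      _ = ρ (cc clf clf_cont clf_zero w) := by rw [hwcc]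
      _ ≤ ρ (cc (cmulf 8) (cmulf_cont 8) (cmulf_zero 8) w) :=
          rho_cc_mono hρ fun x =>
            clf_mono (le_mul_of_one_le_left (hw01 x).1 (by norm_num))
      _ = M := couple hρ hns hw01 hw₀01 hwpure hw₀pure hwpos hw₀pos
  exact le_trans (ENNReal.ofReal_le_ofReal hchain) hUM

/-- Under `NoSplit`, `qiOpen` takes at most one nonzero value. -/
lemma ns_two_valued (hρ : IsQuasiIntegral ρ) (hns : NoSplit ρ) {U V : Set X}
    (hU : qiOpen ρ U ≠ 0) (hV : qiOpen ρ V ≠ 0) : qiOpen ρ U = qiOpen ρ V :=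
  le_antisymm (ns_le hρ hns hV) (ns_le hρ hns hU)

/-- Under `NoSplit`, all values of `qiMeas` on open or closed sets lie in a two-element set. -/
lemma ns_qiMeas_vals (hρ : IsQuasiIntegral ρ) (hns : NoSplit ρ) (c₀ : ℝ≥0∞)
    (hc₀ : ∀ S : Set X, qiOpen ρ S = 0 ∨ qiOpen ρ S = c₀) (A : Set X) :
    qiMeas ρ A = 0 ∨ qiMeas ρ A = c₀ := by
  rw [qiMeas]
  split_ifs with hA
  · exact hc₀ A
  · by_cases hz : ∃ U : Set X, (IsOpen U ∧ A ⊆ U) ∧ qiOpen ρ U = 0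
    · obtain ⟨U, hU, hU0⟩ := hz
      left
      apply le_antisymm _ (zero_le)
      refine iInf₂_le_of_le U hU ?_
      rw [hU0]
    · right
      push_neg at hz
      have hall : ∀ U : Set X, (IsOpen U ∧ A ⊆ U) → qiOpen ρ U = c₀ := by
        intro U hU
        rcases hc₀ U with h | h
        · exact absurd h (hz U hU)
        · exact h
      apply le_antisymm
      · refine iInf₂_le_of_le Set.univ ⟨isOpen_univ, Set.subset_univ _⟩ ?_
        rw [hall Set.univ ⟨isOpen_univ, Set.subset_univ _⟩]
      · refine le_iInf₂ fun U hU => ?_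
        rw [hall U hU]

end NS3

noncomputable def posf : ℝ → ℝ := fun t => max t 0
lemma posf_cont : Continuous posf := continuous_id.max continuous_const
lemma posf_zero : posf 0 = 0 := max_self 0

noncomputable def negf : ℝ → ℝ := fun t => max (-t) 0
lemma negf_cont : Continuous negf := continuous_neg.max continuous_const
lemma negf_zero : negf 0 = 0 := by simp [negf]

noncomputable def minf : ℝ → ℝ := fun t => min t 0
lemma minf_cont : Continuous minf := continuous_id.min continuous_const
lemma minf_zero : minf 0 = 0 := min_self 0

lemma maxsub_eq (a b c d : ℝ) (ha : 0 ≤ a) (hb : 0 ≤ b) (hc : 0 ≤ c) (hd : 0 ≤ d)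
    (hac : a * c = 0) : max (a * b - c * d) 0 = a * b := by
  rcases mul_eq_zero.1 hac with h | h
  · rw [h, zero_mul, zero_sub]
    exact max_eq_right (neg_nonpos.2 (mul_nonneg hc hd))
  · rw [h, zero_mul, sub_zero, max_eq_left (mul_nonneg ha hb)]

section Prod
variable {X Y : Type*} [TopologicalSpace X] [TopologicalSpace Y] [T2Space X]

lemma prodQI_eq (η : C_c(Y, ℝ) → ℝ) (ρ : C_c(X, ℝ) → ℝ) (P : C_c(X × Y, ℝ)) (v : C_c(Y, ℝ))
    (hv : ∀ y, ρ (fiberY P y) = v y) : prodQI η ρ P = η v := by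
  have hT : Tmap ρ P = ⇑v := funext fun y => hv y
  have hcond : Continuous (Tmap ρ P) ∧ HasCompactSupport (Tmap ρ P) := by
    rw [hT]
    exact ⟨v.continuous, v.hasCompactSupport'⟩
  show η (TCc ρ P) = η v
  rw [TCc, dif_pos hcond]
  congr 1
  apply ext
  intro y
  exact hv y

/-- The central consequence of quasi-linearity of the product functional. -/
lemma key_add (ρ : C_c(X, ℝ) → ℝ) (η : C_c(Y, ℝ) → ℝ) (hρ : IsQuasiIntegral ρ)
    (hη : IsQuasiIntegral η) (hqi : IsQuasiIntegral (prodQI η ρ))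
    (f : C_c(X, ℝ)) (φ₁ φ₂ : ℝ → ℝ) (hc₁ : Continuous φ₁) (h₁ : φ₁ 0 = 0)
    (hc₂ : Continuous φ₂) (h₂ : φ₂ 0 = 0) (hn₁ : ∀ t, 0 ≤ φ₁ t) (hn₂ : ∀ t, 0 ≤ φ₂ t)
    (hd : ∀ t, φ₁ t * φ₂ t = 0)
    (g h : C_c(Y, ℝ)) (hg : ∀ y, 0 ≤ g y) (hh : ∀ y, 0 ≤ h y) :
    η ((ρ (cc φ₁ hc₁ h₁ f)) • g + (ρ (cc φ₂ hc₂ h₂ f)) • h) =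
      ρ (cc φ₁ hc₁ h₁ f) * η g + ρ (cc φ₂ hc₂ h₂ f) * η h := by
  set w₁ := cc φ₁ hc₁ h₁ f with hw₁
  set w₂ := cc φ₂ hc₂ h₂ f with hw₂
  set a := ρ w₁ with haa
  set b := ρ w₂ with hbb
  have hw₁nn : ∀ x, 0 ≤ w₁ x := fun x => hn₁ _
  have hw₂nn : ∀ x, 0 ≤ w₂ x := fun x => hn₂ _
  have hdisj : ∀ x, w₁ x * w₂ x = 0 := fun x => hd (f x)
  set F : C_c(X × Y, ℝ) := tensor w₁ g - tensor w₂ h with hFdef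
  have hF : ∀ p : X × Y, F p = w₁ p.1 * g p.2 - w₂ p.1 * h p.2 := by
    intro p
    simp only [hFdef, coe_sub, Pi.sub_apply]
    rfl
  set G := cc posf posf_cont posf_zero F with hGdef
  set H := cc negf negf_cont negf_zero F with hHdef
  have hGfib : ∀ y, fiberY G y = g y • w₁ := by
    intro y
    apply ext
    intro x
    show posf (F (x, y)) = (g y • w₁) x
    rw [hF (x, y)]
    show max (w₁ x * g y - w₂ x * h y) 0 = (g y • w₁) x
    rw [maxsub_eq _ _ _ _ (hw₁nn x) (hg y) (hw₂nn x) (hh y) (hdisj x)]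
    simp [coe_smul, Pi.smul_apply, smul_eq_mul, mul_comm]
  have hHfib : ∀ y, fiberY H y = h y • w₂ := by
    intro y
    apply ext
    intro x
    show negf (F (x, y)) = (h y • w₂) x
    rw [hF (x, y)]
    show max (-(w₁ x * g y - w₂ x * h y)) 0 = (h y • w₂) x
    rw [neg_sub]
    rw [maxsub_eq _ _ _ _ (hw₂nn x) (hh y) (hw₁nn x) (hg y) (by rw [mul_comm]; exact hdisj x)]
    simp [coe_smul, Pi.smul_apply, smul_eq_mul, mul_comm]
  have hGHfib : ∀ y, fiberY (G + H) y = g y • w₁ + h y • w₂ := by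
    intro y
    have e : fiberY (G + H) y = fiberY G y + fiberY H y := by
      apply ext
      intro x
      show (G + H) (x, y) = fiberY G y x + fiberY H y x
      simp only [coe_add, Pi.add_apply]
      rfl
    rw [e, hGfib y, hHfib y]
  have hsamB : ∀ p q : ℝ, ρ (p • w₁ + q • w₂) = p * a + q * b := by
    intro p q
    have e1 : p • w₁ = cc (fun t => p * φ₁ t) (continuous_const.mul hc₁) (by simp [h₁]) f := by
      apply ext
      intro x
      simp [hw₁, coe_smul, Pi.smul_apply, smul_eq_mul]
    have e2 : q • w₂ = cc (fun t => q * φ₂ t) (continuous_const.mul hc₂) (by simp [h₂]) f := by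
      apply ext
      intro x
      simp [hw₂, coe_smul, Pi.smul_apply, smul_eq_mul]
    calc ρ (p • w₁ + q • w₂) = ρ (p • w₁) + ρ (q • w₂) := by
          rw [e1, e2]
          exact hρ.add f _ _ (inB_cc _ _ _ _) (inB_cc _ _ _ _)
      _ = p * a + q * b := by rw [hρ.smul, hρ.smul]
  have p1 : prodQI η ρ G = η (a • g) := by
    apply prodQI_eq
    intro y
    rw [hGfib y, hρ.smul]
    simp [coe_smul, Pi.smul_apply, smul_eq_mul, mul_comm]
    exact Or.inl haa.symm
  have p2 : prodQI η ρ H = η (b • h) := by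
    apply prodQI_eq
    intro y
    rw [hHfib y, hρ.smul]
    simp [coe_smul, Pi.smul_apply, smul_eq_mul, mul_comm]
    exact Or.inl hbb.symm
  have p3 : prodQI η ρ (G + H) = η (a • g + b • h) := by
    apply prodQI_eq
    intro y
    rw [hGHfib y, hsamB]
    simp [coe_add, coe_smul, Pi.add_apply, Pi.smul_apply, smul_eq_mul, mul_comm]
  have hadd := hqi.add F G H (inB_cc _ _ _ _) (inB_cc _ _ _ _)
  rw [p1, p2, p3] at hadd
  rw [hadd, hη.smul, hη.smul]

end Prod

section Eta
variable {Y : Type*} [TopologicalSpace Y] {η : C_c(Y, ℝ) → ℝ}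

lemma eta_posneg (hη : IsQuasiIntegral η) (q : C_c(Y, ℝ)) :
    η q = η (cc posf posf_cont posf_zero q) - η (cc negf negf_cont negf_zero q) := by
  have hsum : cc posf posf_cont posf_zero q + cc minf minf_cont minf_zero q = q := by
    apply ext
    intro x
    simp only [coe_add, Pi.add_apply, cc_apply, posf, minf]
    rw [max_add_min]
    ring
  have hadd := hη.add q _ _ (inB_cc posf posf_cont posf_zero q) (inB_cc minf minf_cont minf_zero q)
  rw [hsum] at hadd
  have hmin : cc minf minf_cont minf_zero q = (-1 : ℝ) • cc negf negf_cont negf_zero q := by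
    apply ext
    intro x
    simp only [cc_apply, minf, negf, coe_smul, Pi.smul_apply, smul_eq_mul]
    rcases le_total (q x) 0 with h | h
    · rw [min_eq_left h, max_eq_left (by linarith)]
      ring
    · rw [min_eq_right h, max_eq_right (by linarith)]
      ring
  rw [hmin, hη.smul] at hadd
  linarith

lemma sum_posneg_key (s t : ℝ) :
    max s 0 + max t 0 + max (-(s + t)) 0 = max (-s) 0 + max (-t) 0 + max (s + t) 0 := by
  simp only [max_def]
  split_ifs <;> linarith

end Eta

end AuxToolkit

end QLF

namespace QLF
theorem statement7 {X Y : Type*}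
    [TopologicalSpace X] [LocallyCompactSpace X] [T2Space X] [ConnectedSpace X]
    [TopologicalSpace Y] [LocallyCompactSpace Y] [T2Space Y] [ConnectedSpace Y]
    (ρ : C_c(X, ℝ) → ℝ) (η : C_c(Y, ℝ) → ℝ)
    (hρ : IsQuasiIntegral ρ) (hη : IsQuasiIntegral η)
    (hvals : ∃ A B C : Set X, (IsOpen A ∨ IsClosed A) ∧ (IsOpen B ∨ IsClosed B) ∧
      (IsOpen C ∨ IsClosed C) ∧ qiMeas ρ A ≠ qiMeas ρ B ∧
      qiMeas ρ B ≠ qiMeas ρ C ∧ qiMeas ρ A ≠ qiMeas ρ C)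
    (hqi : IsQuasiIntegral (prodQI η ρ)) :
    ∀ g h : C_c(Y, ℝ), η (g + h) = η g + η h := by
  classical
  by_cases hsplit : ∃ (f : C_c(X, ℝ)) (φ₁ φ₂ : ℝ → ℝ) (hc₁ : Continuous φ₁) (h₁ : φ₁ 0 = 0)
      (hc₂ : Continuous φ₂) (h₂ : φ₂ 0 = 0), (∀ t, 0 ≤ φ₁ t) ∧ (∀ t, 0 ≤ φ₂ t) ∧
      (∀ t, φ₁ t * φ₂ t = 0) ∧ 0 < ρ (cc φ₁ hc₁ h₁ f) ∧ 0 < ρ (cc φ₂ hc₂ h₂ f)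
  · -- The splitting case: the product quasi-integral forces additivity of η.
    obtain ⟨f, φ₁, φ₂, hc₁, h₁, hc₂, h₂, hn₁, hn₂, hdisj, ha, hb⟩ := hsplit
    have keyadd : ∀ u v : C_c(Y, ℝ), (∀ y, 0 ≤ u y) → (∀ y, 0 ≤ v y) →
        η (u + v) = η u + η v := by
      intro u v hu hv
      set a := ρ (cc φ₁ hc₁ h₁ f) with haa
      set b := ρ (cc φ₂ hc₂ h₂ f) with hbb
      have hu' : ∀ y, 0 ≤ (a⁻¹ • u) y := by
        intro y
        simp only [coe_smul, Pi.smul_apply, smul_eq_mul]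
        exact mul_nonneg (inv_nonneg.2 ha.le) (hu y)
      have hv' : ∀ y, 0 ≤ (b⁻¹ • v) y := by
        intro y
        simp only [coe_smul, Pi.smul_apply, smul_eq_mul]
        exact mul_nonneg (inv_nonneg.2 hb.le) (hv y)
      have h1 := key_add ρ η hρ hη hqi f φ₁ φ₂ hc₁ h₁ hc₂ h₂ hn₁ hn₂ hdisj
        (a⁻¹ • u) (b⁻¹ • v) hu' hv'
      rw [← haa, ← hbb] at h1
      have e1 : a • (a⁻¹ • u) = u := by
        rw [smul_smul, mul_inv_cancel₀ ha.ne', one_smul]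
      have e2 : b • (b⁻¹ • v) = v := by
        rw [smul_smul, mul_inv_cancel₀ hb.ne', one_smul]
      rw [e1, e2] at h1
      have e3 : a * η (a⁻¹ • u) = η u := by rw [← hη.smul, e1]
      have e4 : b * η (b⁻¹ • v) = η v := by rw [← hη.smul, e2]
      rw [h1, e3, e4]
    intro g h
    have hgp := eta_posneg hη g
    have hhp := eta_posneg hη h
    have hghp := eta_posneg hη (g + h)
    have hppnn : ∀ y, 0 ≤ (cc posf posf_cont posf_zero g + cc posf posf_cont posf_zero h) y := by
      intro y
      simp only [coe_add, Pi.add_apply, cc_apply, posf]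
      exact add_nonneg (le_max_right _ _) (le_max_right _ _)
    have hnnnn : ∀ y, 0 ≤ (cc negf negf_cont negf_zero g + cc negf negf_cont negf_zero h) y := by
      intro y
      simp only [coe_add, Pi.add_apply, cc_apply, negf]
      exact add_nonneg (le_max_right _ _) (le_max_right _ _)
    have hU := keyadd (cc posf posf_cont posf_zero g) (cc posf posf_cont posf_zero h)
      (fun y => le_max_right _ _) (fun y => le_max_right _ _)
    have hV := keyadd (cc negf negf_cont negf_zero g) (cc negf negf_cont negf_zero h)
      (fun y => le_max_right _ _) (fun y => le_max_right _ _)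
    have hL := keyadd (cc posf posf_cont posf_zero g + cc posf posf_cont posf_zero h)
      (cc negf negf_cont negf_zero (g + h)) hppnn (fun y => le_max_right _ _)
    have hR := keyadd (cc negf negf_cont negf_zero g + cc negf negf_cont negf_zero h)
      (cc posf posf_cont posf_zero (g + h)) hnnnn (fun y => le_max_right _ _)
    have hkeyCc : (cc posf posf_cont posf_zero g + cc posf posf_cont posf_zero h)
        + cc negf negf_cont negf_zero (g + h)
        = (cc negf negf_cont negf_zero g + cc negf negf_cont negf_zero h)
        + cc posf posf_cont posf_zero (g + h) := by
      apply ext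
      intro y
      simp only [coe_add, Pi.add_apply, cc_apply, posf, negf]
      linarith [sum_posneg_key (g y) (h y)]
    have hLR : η ((cc posf posf_cont posf_zero g + cc posf posf_cont posf_zero h)
        + cc negf negf_cont negf_zero (g + h))
        = η ((cc negf negf_cont negf_zero g + cc negf negf_cont negf_zero h)
        + cc posf posf_cont posf_zero (g + h)) := by rw [hkeyCc]
    rw [hghp, hgp, hhp]
    linarith [hU, hV, hL, hR, hLR]
  · -- No splitting: then qiMeas takes at most two values, contradicting hvals.
    exfalso
    have hns : NoSplit ρ := by
      intro f φ₁ φ₂ hc₁ h₁ hc₂ h₂ hn₁ hn₂ hdisj hpos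
      by_contra hcon
      push_neg at hcon
      exact hsplit ⟨f, φ₁, φ₂, hc₁, h₁, hc₂, h₂, hn₁, hn₂, hdisj, hpos, hcon⟩
    obtain ⟨A, B, C, hAoc, hBoc, hCoc, hAB, hBC, hAC⟩ := hvals
    by_cases hex : ∃ U : Set X, qiOpen ρ U ≠ 0
    · obtain ⟨U₀, hU₀⟩ := hex
      have hc₀ : ∀ S : Set X, qiOpen ρ S = 0 ∨ qiOpen ρ S = qiOpen ρ U₀ := by
        intro S
        by_cases hS : qiOpen ρ S = 0
        · exact Or.inl hS
        · exact Or.inr (ns_two_valued hρ hns hS hU₀)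
      have hvA := ns_qiMeas_vals hρ hns (qiOpen ρ U₀) hc₀ A
      have hvB := ns_qiMeas_vals hρ hns (qiOpen ρ U₀) hc₀ B
      have hvC := ns_qiMeas_vals hρ hns (qiOpen ρ U₀) hc₀ C
      rcases hvA with h1 | h1 <;> rcases hvB with h2 | h2 <;> rcases hvC with h3 | h3 <;>
        first
        | exact hAB (h1.trans h2.symm)
        | exact hBC (h2.trans h3.symm)
        | exact hAC (h1.trans h3.symm)
    · push_neg at hex
      have h0 : ∀ S : Set X, qiMeas ρ S = 0 := by
        intro S
        rw [qiMeas]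
        split_ifs with hS
        · exact hex S
        · apply le_antisymm _ (zero_le)
          refine iInf₂_le_of_le Set.univ ⟨isOpen_univ, Set.subset_univ _⟩ ?_
          rw [hex Set.univ]
      exact hAB ((h0 A).trans (h0 B).symm)
end QLF
end

section
/- Let X and Y be locally compact, connected Hausdorff spaces, ρ a quasi-integral on C_c(X) and η a quasi-integral on C_c(Y). If ρ and η are both almost simple, then η × ρ is a quasi-integral on C_c(X × Y) and is almost simple. -/
open scoped ENNReal CompactlySupported
open CompactlySupportedContinuousMap

namespace QLF

open Set Topology

variable {X : Type*} [TopologicalSpace X]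

section Basics

@[simp] lemma compCc_apply (φ : C(ℝ, ℝ)) (hφ : φ 0 = 0) (f : C_c(X, ℝ)) (x : X) :
    compCc φ hφ f x = φ (f x) := rfl

lemma inB_compCc (φ : C(ℝ, ℝ)) (hφ : φ 0 = 0) (f : C_c(X, ℝ)) :
    InB f (compCc φ hφ f) := ⟨φ, hφ, fun _ => rfl⟩

lemma inB_of_eq (φ : C(ℝ, ℝ)) (hφ : φ 0 = 0) {f g : C_c(X, ℝ)}
    (h : ∀ x, g x = φ (f x)) : InB f g := ⟨φ, hφ, h⟩

lemma qi_zero {τ : C_c(X, ℝ) → ℝ} (hτ : IsQuasiIntegral τ) : τ 0 = 0 := by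
  have h := hτ.smul 0 0
  simpa using h

lemma exists_bound (f : C_c(X, ℝ)) : ∃ b : ℝ, 0 ≤ b ∧ ∀ x, |f x| ≤ b := by
  have hK : IsCompact ((fun x => |f x|) '' tsupport f) :=
    (f.hasCompactSupport').image (continuous_abs.comp f.continuous)
  have hK' : IsCompact (insert 0 ((fun x => |f x|) '' tsupport f)) := hK.insert 0
  refine ⟨sSup (insert 0 ((fun x => |f x|) '' tsupport f)), ?_, ?_⟩
  · exact le_csSup hK'.bddAbove (mem_insert _ _)
  · intro x
    by_cases hx : x ∈ tsupport f
    · exact le_csSup hK'.bddAbove (mem_insert_of_mem _ ⟨x, hx, rfl⟩)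
    · have : f x = 0 := image_eq_zero_of_notMem_tsupport hx
      rw [this, abs_zero]
      exact le_csSup hK'.bddAbove (mem_insert _ _)

end Basics

section QiMeas

variable {τ : C_c(X, ℝ) → ℝ}

lemma le_qiOpen {f : C_c(X, ℝ)} (hf : ∀ x, 0 ≤ f x ∧ f x ≤ 1) {U : Set X}
    (hsub : tsupport f ⊆ U) : ENNReal.ofReal (τ f) ≤ qiOpen τ U :=
  le_iSup₂_of_le f ⟨hf, hsub⟩ le_rfl

lemma qiOpen_mono {U V : Set X} (h : U ⊆ V) : qiOpen τ U ≤ qiOpen τ V :=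
  iSup₂_le fun f hf => le_iSup₂_of_le f ⟨hf.1, hf.2.trans h⟩ le_rfl

lemma qiMeas_open {U : Set X} (hU : IsOpen U) : qiMeas τ U = qiOpen τ U := if_pos hU

lemma qiMeas_le_of_open_superset {A U : Set X} (hU : IsOpen U) (h : A ⊆ U) :
    qiMeas τ A ≤ qiOpen τ U := by
  by_cases hA : IsOpen A
  · rw [qiMeas_open hA]; exact qiOpen_mono h
  · rw [qiMeas, if_neg hA]
    exact iInf₂_le U ⟨hU, h⟩

lemma qiMeas_mono {A B : Set X} (h : A ⊆ B) : qiMeas τ A ≤ qiMeas τ B := by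
  by_cases hB : IsOpen B
  · rw [qiMeas_open hB]
    exact qiMeas_le_of_open_superset hB h
  · conv_rhs => rw [qiMeas, if_neg hB]
    exact le_iInf₂ fun U hU => qiMeas_le_of_open_superset hU.1 (h.trans hU.2)

lemma qiOpen_empty (hτ : IsQuasiIntegral τ) : qiOpen τ (∅ : Set X) = 0 := by
  refine le_antisymm (iSup₂_le fun f hf => ?_) zero_le
  have hf0 : f = 0 := by
    ext x
    by_contra hx
    exact absurd (hf.2 (subset_tsupport _ hx)) (Set.notMem_empty x)
  simp [hf0, qi_zero hτ]

lemma le_qiMeas_tsupport (hτ : IsQuasiIntegral τ) {f : C_c(X, ℝ)}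
    (hf : ∀ x, 0 ≤ f x ∧ f x ≤ 1) :
    ENNReal.ofReal (τ f) ≤ qiMeas τ (tsupport f) := by
  by_cases hA : IsOpen (tsupport f)
  · rw [qiMeas_open hA]; exact le_qiOpen hf subset_rfl
  · rw [qiMeas, if_neg hA]
    exact le_iInf₂ fun U hU => le_qiOpen hf hU.2

/-- Generic inner regularity of `qiMeas` on open sets. -/
lemma qiOpen_eq_iSup_compact (hτ : IsQuasiIntegral τ) {U : Set X} (hU : IsOpen U) :
    qiOpen τ U = ⨆ (K : Set X) (_ : IsCompact K ∧ K ⊆ U), qiMeas τ K := by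
  refine le_antisymm (iSup₂_le fun f hf => ?_) (iSup₂_le fun K hK => ?_)
  · exact le_iSup₂_of_le (tsupport f) ⟨f.hasCompactSupport', hf.2⟩ (le_qiMeas_tsupport hτ hf.1)
  · exact qiMeas_le_of_open_superset hU hK.2

/-- Generic outer regularity of `qiMeas`. -/
lemma qiMeas_eq_iInf_open {F : Set X} :
    qiMeas τ F = ⨅ (U : Set X) (_ : IsOpen U ∧ F ⊆ U), qiMeas τ U := by
  refine le_antisymm (le_iInf₂ fun U hU => ?_) ?_
  · rw [qiMeas_open hU.1]
    exact qiMeas_le_of_open_superset hU.1 hU.2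
  · by_cases hF : IsOpen F
    · exact (iInf₂_le F ⟨hF, subset_rfl⟩)
    · rw [qiMeas, if_neg hF]
      exact le_iInf₂ fun U hU => (iInf₂_le U hU).trans_eq (qiMeas_open hU.1)

lemma exists_test_gt {U : Set X} {r : ℝ} (hr : 0 ≤ r) (h : ENNReal.ofReal r < qiOpen τ U) :
    ∃ f : C_c(X, ℝ), (∀ x, 0 ≤ f x ∧ f x ≤ 1) ∧ tsupport f ⊆ U ∧ r < τ f := by
  rw [qiOpen, lt_iSup_iff] at h
  obtain ⟨f, hf⟩ := h
  rw [lt_iSup_iff] at hf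
  obtain ⟨hcond, hlt⟩ := hf
  refine ⟨f, hcond.1, hcond.2, ?_⟩
  by_contra hle
  push_neg at hle
  exact absurd (ENNReal.ofReal_le_ofReal hle) (not_le.mpr hlt)

end QiMeas

end QLF
namespace QLF

open Set Topology

variable {X : Type*} [TopologicalSpace X] {τ : C_c(X, ℝ) → ℝ}

section Ramp

/-- The continuous ramp function: `0` for `s ≤ a`, `1` for `s ≥ b`, linear in between. -/
noncomputable def ramp (a b : ℝ) : C(ℝ, ℝ) :=
  ⟨fun s => max 0 (min 1 ((s - a) / (b - a))), by fun_prop⟩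

lemma ramp_apply (a b s : ℝ) : ramp a b s = max 0 (min 1 ((s - a) / (b - a))) := rfl

lemma ramp_nonneg (a b s : ℝ) : 0 ≤ ramp a b s := le_max_left _ _

lemma ramp_le_one (a b s : ℝ) : ramp a b s ≤ 1 :=
  max_le zero_le_one (min_le_left _ _)

lemma ramp_of_le {a b : ℝ} (hab : a < b) {s : ℝ} (h : s ≤ a) : ramp a b s = 0 := by
  rw [ramp_apply]
  have h1 : (s - a) / (b - a) ≤ 0 :=
    div_nonpos_of_nonpos_of_nonneg (by linarith) (by linarith)
  rw [min_eq_right (h1.trans zero_le_one), max_eq_left h1]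

lemma ramp_of_ge {a b : ℝ} (hab : a < b) {s : ℝ} (h : b ≤ s) : ramp a b s = 1 := by
  rw [ramp_apply]
  have h1 : (1 : ℝ) ≤ (s - a) / (b - a) := by
    rw [le_div_iff₀ (by linarith)]
    linarith
  rw [min_eq_left h1, max_eq_right zero_le_one]

end Ramp

section QITricks

lemma qi_split (hτ : IsQuasiIntegral τ) (u : C_c(X, ℝ)) {φ ψ χ : C(ℝ, ℝ)}
    (hφ : φ 0 = 0) (hψ : ψ 0 = 0) (hχ : χ 0 = 0)
    (hsum : ∀ s, χ s = φ s + ψ s) :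
    τ (compCc χ hχ u) = τ (compCc φ hφ u) + τ (compCc ψ hψ u) := by
  have heq : compCc χ hχ u = compCc φ hφ u + compCc ψ hψ u := by
    ext x
    simp [hsum]
  rw [heq]
  exact hτ.add u _ _ (inB_compCc _ _ _) (inB_compCc _ _ _)

lemma qi_compCc_nonneg (hτ : IsQuasiIntegral τ) (u : C_c(X, ℝ)) {φ : C(ℝ, ℝ)}
    (hφ : φ 0 = 0) (h : ∀ s, 0 ≤ φ s) : 0 ≤ τ (compCc φ hφ u) :=
  hτ.pos _ fun x => h _

lemma qi_compCc_mono (hτ : IsQuasiIntegral τ) (u : C_c(X, ℝ)) {φ ψ : C(ℝ, ℝ)}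
    (hφ : φ 0 = 0) (hψ : ψ 0 = 0) (h : ∀ s, φ s ≤ ψ s) :
    τ (compCc φ hφ u) ≤ τ (compCc ψ hψ u) := by
  have hd : (ψ - φ) 0 = 0 := by simp [hφ, hψ]
  have hsum := qi_split hτ u hφ hd hψ (fun s => by simp)
  have hpos : 0 ≤ τ (compCc (ψ - φ) hd u) :=
    qi_compCc_nonneg hτ u hd fun s => by simpa using h s
  linarith

lemma qi_compCc_neg (hτ : IsQuasiIntegral τ) (u : C_c(X, ℝ)) {φ : C(ℝ, ℝ)}
    (hφ : φ 0 = 0) (hnφ : (-φ) 0 = 0) :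
    τ (compCc (-φ) hnφ u) = -τ (compCc φ hφ u) := by
  have heq : compCc (-φ) hnφ u = (-1 : ℝ) • compCc φ hφ u := by
    ext x
    simp
  rw [heq, hτ.smul]
  ring

/-- `|τ (φ ∘ u)| ≤ τ (|φ| ∘ u)`. -/
lemma qi_abs_le (hτ : IsQuasiIntegral τ) (u : C_c(X, ℝ)) {φ ψ : C(ℝ, ℝ)}
    (hφ : φ 0 = 0) (hψ : ψ 0 = 0) (habs : ∀ s, ψ s = |φ s|) :
    |τ (compCc φ hφ u)| ≤ τ (compCc ψ hψ u) := by
  have hnφ : (-φ) 0 = 0 := by simp [hφ]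
  rw [abs_le]
  constructor
  · have h1 : τ (compCc (-φ) hnφ u) ≤ τ (compCc ψ hψ u) :=
      qi_compCc_mono hτ u hnφ hψ fun s => by
        rw [habs s]; simp; linarith [neg_abs_le (φ s), abs_nonneg (φ s), le_abs_self (φ s)]
    rw [qi_compCc_neg hτ u hφ hnφ] at h1
    linarith
  · exact qi_compCc_mono hτ u hφ hψ fun s => by rw [habs s]; exact le_abs_self _

lemma qi_le_bound (hτ : IsQuasiIntegral τ) {v : C_c(X, ℝ)} {b kr : ℝ}
    (hb : 0 ≤ b) (hkr : 0 ≤ kr) (h0 : ∀ x, 0 ≤ v x) (hvb : ∀ x, v x ≤ b)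
    (huniv : qiOpen τ (Set.univ : Set X) ≤ ENNReal.ofReal kr) : τ v ≤ b * kr := by
  rcases hb.eq_or_lt with hb0 | hb0
  · have hv : v = 0 := by
      ext x
      exact le_antisymm (by rw [← hb0] at hvb; exact hvb x) (h0 x)
    rw [hv, qi_zero hτ, ← hb0, zero_mul]
  · set f := b⁻¹ • v with hf
    have hfx : ∀ x, f x = b⁻¹ * v x := fun x => rfl
    have hftest : ∀ x, 0 ≤ f x ∧ f x ≤ 1 := fun x => by
      constructor
      · rw [hfx]; exact mul_nonneg (by positivity) (h0 x)
      · rw [hfx, inv_mul_le_iff₀ hb0, mul_one]; exact hvb x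
    have hle : ENNReal.ofReal (τ f) ≤ ENNReal.ofReal kr :=
      (le_qiOpen hftest (subset_univ _)).trans huniv
    have hτf : τ f ≤ kr := by
      by_contra hc
      push_neg at hc
      have := (ENNReal.ofReal_lt_ofReal_iff_of_nonneg hkr).mpr hc
      exact absurd hle (not_le.mpr this)
    have hsm : τ f = b⁻¹ * τ v := hτ.smul b⁻¹ v
    rw [hsm] at hτf
    calc τ v = b * (b⁻¹ * τ v) := by field_simp
    _ ≤ b * kr := mul_le_mul_of_nonneg_left hτf hb
  
lemma qi_null (hτ : IsQuasiIntegral τ) {v : C_c(X, ℝ)} {U : Set X}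
    (h0 : ∀ x, 0 ≤ v x) (hsub : tsupport v ⊆ U) (hnull : qiOpen τ U = 0) : τ v = 0 := by
  obtain ⟨b, hb, hvb⟩ := exists_bound v
  rcases hb.eq_or_lt with hb0 | hb0
  · have hv : v = 0 := by
      ext x
      have := hvb x
      rw [← hb0] at this
      simpa using abs_eq_zero.mp (le_antisymm this (abs_nonneg _))
    rw [hv, qi_zero hτ]
  · set f := b⁻¹ • v with hf
    have hfx : ∀ x, f x = b⁻¹ * v x := fun x => rfl
    have hftest : ∀ x, 0 ≤ f x ∧ f x ≤ 1 := fun x => by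
      constructor
      · rw [hfx]; exact mul_nonneg (by positivity) (h0 x)
      · rw [hfx, inv_mul_le_iff₀ hb0, mul_one]
        exact (le_abs_self _).trans (hvb x)
    have hsupf : tsupport f ⊆ U := by
      refine subset_trans (closure_minimal ?_ (isClosed_tsupport (⇑v))) hsub
      intro x hx
      have hx' : f x ≠ 0 := hx
      have hmem : x ∈ Function.support (⇑v) := by
        intro hvx
        rw [hfx, hvx, mul_zero] at hx'
        exact hx' rfl
      exact subset_tsupport (⇑v) hmem
    have hle : ENNReal.ofReal (τ f) ≤ 0 := (le_qiOpen hftest hsupf).trans hnull.le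
    have hτf : τ f ≤ 0 := by
      by_contra hc
      push_neg at hc
      rw [le_zero_iff, ENNReal.ofReal_eq_zero] at hle
      linarith
    have hsm : τ f = b⁻¹ * τ v := hτ.smul b⁻¹ v
    have hvpos : 0 ≤ τ v := hτ.pos v h0
    nlinarith [hτf, hsm, inv_pos.mpr hb0]

/-- Special monotonicity: if `h = 1` on the support of the test function `g` then
`τ g ≤ τ h`. -/
lemma qi_special_mono (hτ : IsQuasiIntegral τ) {g h : C_c(X, ℝ)}
    (hg : ∀ x, 0 ≤ g x ∧ g x ≤ 1) (hh : ∀ x, 0 ≤ h x ∧ h x ≤ 1)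
    (h1 : ∀ x ∈ tsupport g, h x = 1) : τ g ≤ τ h := by
  classical
  set w : C_c(X, ℝ) := g + h with hw
  have hwx : ∀ x, w x = g x + h x := fun x => rfl
  have hw2 : ∀ x, 0 ≤ w x ∧ w x ≤ 2 := fun x => by
    constructor
    · rw [hwx]; have := (hg x).1; have := (hh x).1; linarith
    · rw [hwx]; have := (hg x).2; have := (hh x).2; linarith
  set φ₁ : C(ℝ, ℝ) := ⟨fun s => min s 1, by fun_prop⟩ with hφ₁def
  have hφ₁ : φ₁ 0 = 0 := by simp [hφ₁def]
  set φ₂ : C(ℝ, ℝ) := ⟨fun s => max (s - 1) 0, by fun_prop⟩ with hφ₂def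
  have hφ₂ : φ₂ 0 = 0 := by
    simp [hφ₂def]
  have hgw : ∀ x, g x = φ₂ (w x) := by
    intro x
    by_cases hx : x ∈ tsupport g
    · have hhx := h1 x hx
      simp only [hφ₂def, ContinuousMap.coe_mk, hwx, hhx]
      have := (hg x).1
      rw [max_eq_left (by linarith)]
      ring
    · have hgx : g x = 0 := image_eq_zero_of_notMem_tsupport hx
      simp only [hφ₂def, ContinuousMap.coe_mk, hwx, hgx, zero_add]
      have := (hh x).2
      rw [max_eq_right (by linarith)]
  have hhw : ∀ x, h x = φ₁ (w x) := by
    intro x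
    by_cases hx : x ∈ tsupport g
    · have hhx := h1 x hx
      simp only [hφ₁def, ContinuousMap.coe_mk, hwx, hhx]
      have := (hg x).1
      rw [min_eq_right (by linarith)]
    · have hgx : g x = 0 := image_eq_zero_of_notMem_tsupport hx
      simp only [hφ₁def, ContinuousMap.coe_mk, hwx, hgx, zero_add]
      exact (min_eq_left (hh x).2).symm
  have hadd : τ (g + h) = τ g + τ h :=
    hτ.add w g h ⟨φ₂, hφ₂, hgw⟩ ⟨φ₁, hφ₁, hhw⟩
  -- now show `τ h ≥ τ w / 2`
  set ψ : C(ℝ, ℝ) := ⟨fun s => min s 1 - s / 2, by fun_prop⟩ with hψdef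
  have hψ : ψ 0 = 0 := by simp [hψdef]
  set ι : C(ℝ, ℝ) := ⟨fun s => s / 2, by fun_prop⟩ with hιdef
  have hι : ι 0 = 0 := by simp [hιdef]
  have hsplit := qi_split hτ w hψ hι hφ₁ (fun s => by simp [hψdef, hιdef, hφ₁def])
  have hψpos : 0 ≤ τ (compCc ψ hψ w) := by
    refine hτ.pos _ fun x => ?_
    have h2 := hw2 x
    simp only [compCc_apply, hψdef, ContinuousMap.coe_mk]
    rcases le_total (w x) 1 with hc | hc
    · rw [min_eq_left hc]; linarith [h2.1]
    · rw [min_eq_right hc]; linarith [h2.2]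
  have hιval : τ (compCc ι hι w) = τ w / 2 := by
    have heq : compCc ι hι w = (2⁻¹ : ℝ) • w := by
      ext x
      simp [hιdef]
      ring
    rw [heq, hτ.smul]
    ring
  have hheq : compCc φ₁ hφ₁ w = h := by
    ext x
    simp [(hhw x).symm]
  rw [hheq, hιval] at hsplit
  linarith

end QITricks

end QLF
namespace QLF

open Set Topology

variable {X : Type*} [TopologicalSpace X]

section MI

/-- Hypotheses: `τ` is a quasi-integral whose topological measure is two-valued `{0, k}`
and additive on admissible disjoint pairs. -/
structure SimpleQIHyp (τ : C_c(X, ℝ) → ℝ) (k : ℝ≥0∞) : Prop where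
  hqi : IsQuasiIntegral τ
  hk0 : k ≠ 0
  hkT : k ≠ ⊤
  htwo : ∀ A : Set X, IsOpen A ∨ IsClosed A → qiMeas τ A = 0 ∨ qiMeas τ A = k
  hadd : ∀ A B : Set X, Disjoint A B → (IsCompact A ∨ IsOpen A) → (IsCompact B ∨ IsOpen B) →
      (IsCompact (A ∪ B) ∨ IsOpen (A ∪ B)) → qiMeas τ (A ∪ B) = qiMeas τ A + qiMeas τ B

variable {τ : C_c(X, ℝ) → ℝ} {k : ℝ≥0∞}

namespace SimpleQIHyp

lemma kr_pos (H : SimpleQIHyp τ k) : 0 < k.toReal := ENNReal.toReal_pos H.hk0 H.hkT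

lemma k_eq (H : SimpleQIHyp τ k) : ENNReal.ofReal k.toReal = k := ENNReal.ofReal_toReal H.hkT

lemma qiOpen_univ_le (H : SimpleQIHyp τ k) :
    qiOpen τ (Set.univ : Set X) ≤ ENNReal.ofReal k.toReal := by
  rw [H.k_eq, ← qiMeas_open isOpen_univ]
  rcases H.htwo Set.univ (Or.inl isOpen_univ) with h | h
  · rw [h]; exact zero_le
  · rw [h]

lemma not_add_self (H : SimpleQIHyp τ k) : k + k ≠ k := by
  intro h
  have h2 : (k + k).toReal = k.toReal := by rw [h]
  rw [ENNReal.toReal_add H.hkT H.hkT] at h2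
  have := H.kr_pos
  linarith

end SimpleQIHyp

/-- Level threshold of `u` with respect to `τ`: the positive-side parameter. -/
noncomputable def tpos (τ : C_c(X, ℝ) → ℝ) (k : ℝ≥0∞) (u : C_c(X, ℝ)) : ℝ :=
  sSup (insert 0 {s : ℝ | 0 < s ∧ qiMeas τ {x | s < u x} = k})

/-- The "value" of `u` (the point where the pushforward measure concentrates). -/
noncomputable def tval (τ : C_c(X, ℝ) → ℝ) (k : ℝ≥0∞) (u : C_c(X, ℝ)) : ℝ :=
  tpos τ k u - tpos τ k (-u)

section Levels

variable (u : C_c(X, ℝ))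

lemma isOpen_level (s : ℝ) : IsOpen {x | s < u x} := isOpen_lt continuous_const u.continuous

lemma tpos_bddAbove (H : SimpleQIHyp τ k) :
    BddAbove (insert 0 {s : ℝ | 0 < s ∧ qiMeas τ {x | s < u x} = k}) := by
  obtain ⟨b, hb0, hb⟩ := exists_bound u
  refine ⟨max b 0, ?_⟩
  rintro s (rfl | ⟨hs0, hs⟩)
  · exact le_max_right _ _
  · by_contra hc
    push_neg at hc
    have hempty : {x | s < u x} = ∅ := by
      ext x
      simp only [mem_setOf_eq, mem_empty_iff_false, iff_false, not_lt]
      calc u x ≤ |u x| := le_abs_self _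
      _ ≤ b := hb x
      _ ≤ max b 0 := le_max_left _ _
      _ ≤ s := hc.le
    rw [hempty] at hs
    rw [qiMeas_open isOpen_empty, qiOpen_empty H.hqi] at hs
    exact H.hk0 hs.symm

lemma tpos_nonneg (H : SimpleQIHyp τ k) : 0 ≤ tpos τ k u := le_csSup (tpos_bddAbove u H) (mem_insert _ _)

lemma level_full (H : SimpleQIHyp τ k) {s : ℝ} (hs0 : 0 < s) (hst : s < tpos τ k u) :
    qiMeas τ {x | s < u x} = k := by
  obtain ⟨r, hr, hsr⟩ := exists_lt_of_lt_csSup (insert_nonempty _ _) hst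
  rcases hr with rfl | ⟨hr0, hrk⟩
  · linarith
  · have hsub : {x | r < u x} ⊆ {x | s < u x} := fun x hx => lt_trans hsr hx
    have hge : k ≤ qiMeas τ {x | s < u x} := hrk ▸ qiMeas_mono hsub
    rcases H.htwo _ (Or.inl (isOpen_level u s)) with h | h
    · rw [h] at hge
      exact absurd (le_zero_iff.mp hge) H.hk0
    · exact h

lemma level_null (H : SimpleQIHyp τ k) {s : ℝ} (hs0 : 0 < s) (hst : tpos τ k u < s) :
    qiMeas τ {x | s < u x} = 0 := by
  rcases H.htwo _ (Or.inl (isOpen_level u s)) with h | h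
  · exact h
  · exfalso
    have : s ≤ tpos τ k u := le_csSup (tpos_bddAbove u H) (mem_insert_of_mem _ ⟨hs0, h⟩)
    linarith

lemma not_both_pos (H : SimpleQIHyp τ k) : ¬(0 < tpos τ k u ∧ 0 < tpos τ k (-u)) := by
  rintro ⟨h1, h2⟩
  set s := tpos τ k u / 2 with hs
  set s' := tpos τ k (-u) / 2 with hs'
  have hA : qiMeas τ {x | s < u x} = k := level_full u H (by linarith) (by linarith)
  have hB : qiMeas τ {x | s' < (-u) x} = k := level_full (-u) H (by linarith) (by linarith)
  have hdisj : Disjoint {x | s < u x} {x | s' < (-u) x} := by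
    rw [Set.disjoint_left]
    intro x hx1 hx2
    simp only [mem_setOf_eq] at hx1 hx2
    have hnx : (-u) x = -(u x) := rfl
    rw [hnx] at hx2
    have h2 := h2
    nlinarith [hx1, hx2, h1, h2]
  have := H.hadd _ _ hdisj (Or.inr (isOpen_level u s)) (Or.inr (isOpen_level (-u) s'))
    (Or.inr ((isOpen_level u s).union (isOpen_level (-u) s')))
  rw [hA, hB] at this
  rcases H.htwo _ (Or.inl ((isOpen_level u s).union (isOpen_level (-u) s'))) with h | h
  · rw [h] at this
    have h0 : k + k = 0 := this.symm
    exact H.hk0 (le_zero_iff.mp (le_trans le_self_add h0.le))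
  · rw [h] at this
    exact H.not_add_self this.symm

lemma tpos_or (H : SimpleQIHyp τ k) : tpos τ k (-u) = 0 ∨ tpos τ k u = 0 := by
  by_contra hc
  push_neg at hc
  exact not_both_pos u H ⟨(tpos_nonneg u H).lt_of_ne (Ne.symm hc.2),
    (tpos_nonneg (-u) H).lt_of_ne (Ne.symm hc.1)⟩

end Levels

end MI

end QLF
namespace QLF

open Set Topology

variable {X : Type*} [TopologicalSpace X] {τ : C_c(X, ℝ) → ℝ} {k : ℝ≥0∞}

section Bump

/-- Trapezoid bump: `0` left of `a` and right of `d`, `1` on `[b,c]`. -/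
noncomputable def bump (a b c d : ℝ) : C(ℝ, ℝ) :=
  ⟨fun s => ramp a b s * (1 - ramp c d s),
    ((ramp a b).continuous.mul (continuous_const.sub (ramp c d).continuous))⟩

lemma bump_apply (a b c d s : ℝ) : bump a b c d s = ramp a b s * (1 - ramp c d s) := rfl

lemma bump_nonneg (a b c d s : ℝ) : 0 ≤ bump a b c d s :=
  mul_nonneg (ramp_nonneg _ _ _) (by linarith [ramp_le_one c d s])

lemma bump_le_one (a b c d s : ℝ) : bump a b c d s ≤ 1 := by
  rw [bump_apply]
  have h1 := ramp_le_one a b s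
  have h2 := ramp_nonneg a b s
  have h3 := ramp_le_one c d s
  have h4 := ramp_nonneg c d s
  nlinarith

lemma bump_eq_one {a b c d s : ℝ} (hab : a < b) (hcd : c < d) (h1 : b ≤ s) (h2 : s ≤ c) :
    bump a b c d s = 1 := by
  rw [bump_apply, ramp_of_ge hab h1, ramp_of_le hcd h2]
  ring

lemma bump_eq_zero_left {a b c d s : ℝ} (hab : a < b) (h : s ≤ a) : bump a b c d s = 0 := by
  rw [bump_apply, ramp_of_le hab h, zero_mul]

lemma bump_eq_zero_right {a b c d s : ℝ} (hcd : c < d) (h : d ≤ s) : bump a b c d s = 0 := by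
  rw [bump_apply, ramp_of_ge hcd h]
  ring

end Bump

section Vanish

lemma qi_small (H : SimpleQIHyp τ k) (u : C_c(X, ℝ)) {φ : C(ℝ, ℝ)} (hφ : φ 0 = 0) {ε : ℝ}
    (hφb : ∀ s, |φ s| ≤ ε) : |τ (compCc φ hφ u)| ≤ ε * k.toReal := by
  have hε : 0 ≤ ε := le_trans (abs_nonneg _) (hφb 0)
  set ψ : C(ℝ, ℝ) := ⟨fun s => |φ s|, continuous_abs.comp φ.continuous⟩ with hψdef
  have hψ : ψ 0 = 0 := by simp [hψdef, hφ]
  calc |τ (compCc φ hφ u)| ≤ τ (compCc ψ hψ u) := qi_abs_le H.hqi u hφ hψ (fun s => rfl)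
  _ ≤ ε * k.toReal := qi_le_bound H.hqi hε H.kr_pos.le (fun x => abs_nonneg _)
      (fun x => hφb _) H.qiOpen_univ_le

lemma vanish_right (H : SimpleQIHyp τ k) (u : C_c(X, ℝ)) {ψ : C(ℝ, ℝ)} (hψ0 : ψ 0 = 0)
    (hψpos : ∀ s, 0 ≤ ψ s) {a : ℝ} (ha : tpos τ k u < a) (hvan : ∀ s, s ≤ a → ψ s = 0) :
    τ (compCc ψ hψ0 u) = 0 := by
  have htp := tpos_nonneg u H
  set a' := (tpos τ k u + a) / 2 with ha'def
  have ha'1 : tpos τ k u < a' := by rw [ha'def]; linarith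
  have ha'0 : 0 < a' := by rw [ha'def]; linarith
  have ha'2 : a' < a := by rw [ha'def]; linarith
  have hnull : qiOpen τ {x | a' < u x} = 0 := by
    rw [← qiMeas_open (isOpen_level u a')]
    exact level_null u H ha'0 ha'1
  refine qi_null H.hqi (fun x => hψpos _) ?_ hnull
  have hsup : Function.support (⇑(compCc ψ hψ0 u)) ⊆ {x | a ≤ u x} := by
    intro x hx
    have hx' : ψ (u x) ≠ 0 := hx
    rw [mem_setOf_eq]
    by_contra hc
    push_neg at hc
    exact hx' (hvan _ hc.le)
  have h1 : tsupport (⇑(compCc ψ hψ0 u)) ⊆ {x | a ≤ u x} :=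
    closure_minimal hsup (isClosed_le continuous_const u.continuous)
  exact subset_trans h1 (fun x hx => lt_of_lt_of_le ha'2 hx)

lemma vanish_left (H : SimpleQIHyp τ k) (u : C_c(X, ℝ)) {ψ : C(ℝ, ℝ)} (hψ0 : ψ 0 = 0)
    (hψpos : ∀ s, 0 ≤ ψ s) {a : ℝ} (ha : a < 0) (ha2 : tpos τ k (-u) < -a)
    (hvan : ∀ s, a ≤ s → ψ s = 0) : τ (compCc ψ hψ0 u) = 0 := by
  have htp := tpos_nonneg (-u) H
  set b' := (tpos τ k (-u) + -a) / 2 with hb'def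
  have hb'1 : tpos τ k (-u) < b' := by rw [hb'def]; linarith
  have hb'0 : 0 < b' := by rw [hb'def]; linarith
  have hb'2 : b' < -a := by rw [hb'def]; linarith
  have hnull : qiOpen τ {x | b' < (-u) x} = 0 := by
    rw [← qiMeas_open (isOpen_level (-u) b')]
    exact level_null (-u) H hb'0 hb'1
  refine qi_null H.hqi (fun x => hψpos _) ?_ hnull
  have hcl : IsClosed {x | -a ≤ (-u) x} := isClosed_le continuous_const (-u).continuous
  have hsup : Function.support (⇑(compCc ψ hψ0 u)) ⊆ {x | -a ≤ (-u) x} := by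
    intro x hx
    have hx' : ψ (u x) ≠ 0 := hx
    have hux : u x < a := by
      by_contra hc
      push_neg at hc
      exact hx' (hvan _ hc)
    have hnx : (-u) x = -(u x) := rfl
    rw [mem_setOf_eq, hnx]
    linarith
  have h1 : tsupport (⇑(compCc ψ hψ0 u)) ⊆ {x | -a ≤ (-u) x} := closure_minimal hsup hcl
  refine subset_trans h1 ?_
  intro x hx
  rw [mem_setOf_eq] at hx ⊢
  linarith

lemma vanish_band (H : SimpleQIHyp τ k) (u : C_c(X, ℝ)) {ψ : C(ℝ, ℝ)} (hψ0 : ψ 0 = 0)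
    (hψpos : ∀ s, 0 ≤ ψ s) {a b : ℝ} (ha : 0 < a) (hb : b < tpos τ k u)
    (hvan : ∀ s, s < a ∨ b < s → ψ s = 0) : τ (compCc ψ hψ0 u) = 0 := by
  by_cases hab : b < a
  · have hall : ∀ s, ψ s = 0 := by
      intro s
      rcases lt_or_ge s a with h | h
      · exact hvan s (Or.inl h)
      · exact hvan s (Or.inr (lt_of_lt_of_le hab h))
    have : compCc ψ hψ0 u = 0 := by
      ext x
      simp [hall]
    rw [this, qi_zero H.hqi]
  · push_neg at hab
    have hb0 : 0 < b := lt_of_lt_of_le ha hab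
    set s₂ := (b + tpos τ k u) / 2 with hs₂def
    have hs₂0 : 0 < s₂ := by rw [hs₂def]; linarith
    have hs₂t : s₂ < tpos τ k u := by rw [hs₂def]; linarith
    have hbs₂ : b < s₂ := by rw [hs₂def]; linarith
    set Z := {x | a / 2 < u x ∧ u x < s₂} with hZdef
    have hZopen : IsOpen Z := by
      have h1 : IsOpen {x | a / 2 < u x} := isOpen_level u _
      have h2 : IsOpen {x | u x < s₂} := isOpen_lt u.continuous continuous_const
      exact (h1.inter h2)
    set W := {x | s₂ < u x} with hWdef
    have hW : qiMeas τ W = k := level_full u H hs₂0 hs₂t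
    have hZnull : qiMeas τ Z = 0 := by
      rcases H.htwo Z (Or.inl hZopen) with h | h
      · exact h
      · exfalso
        have hdisj : Disjoint Z W := by
          rw [Set.disjoint_left]
          rintro x ⟨_, hx2⟩ hxW
          rw [hWdef, mem_setOf_eq] at hxW
          linarith
        have hsum := H.hadd Z W hdisj (Or.inr hZopen) (Or.inr (isOpen_level u s₂))
          (Or.inr (hZopen.union (isOpen_level u s₂)))
        rw [h, hW] at hsum
        rcases H.htwo _ (Or.inl (hZopen.union (isOpen_level u s₂))) with h2 | h2
        · rw [h2] at hsum
          exact H.hk0 (le_zero_iff.mp (le_trans le_self_add hsum.symm.le))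
        · rw [h2] at hsum
          exact H.not_add_self hsum.symm
    refine qi_null H.hqi (fun x => hψpos _) ?_ (by rw [← qiMeas_open hZopen]; exact hZnull)
    have hcl : IsClosed {x | a ≤ u x ∧ u x ≤ b} :=
      (isClosed_le continuous_const u.continuous).inter (isClosed_le u.continuous continuous_const)
    have hsup : Function.support (⇑(compCc ψ hψ0 u)) ⊆ {x | a ≤ u x ∧ u x ≤ b} := by
      intro x hx
      have hx' : ψ (u x) ≠ 0 := hx
      constructor
      · by_contra hc; push_neg at hc; exact hx' (hvan _ (Or.inl hc))
      · by_contra hc; push_neg at hc; exact hx' (hvan _ (Or.inr hc))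
    have h1 : tsupport (⇑(compCc ψ hψ0 u)) ⊆ {x | a ≤ u x ∧ u x ≤ b} := closure_minimal hsup hcl
    refine subset_trans h1 ?_
    rintro x ⟨h1', h2'⟩
    exact ⟨by linarith, by linarith⟩

end Vanish

end QLF
namespace QLF

open Set Topology

variable {X : Type*} [TopologicalSpace X] {τ : C_c(X, ℝ) → ℝ} {k : ℝ≥0∞}

lemma cont_near (φ : C(ℝ, ℝ)) (t : ℝ) {ε : ℝ} (hε : 0 < ε) :
    ∃ δ : ℝ, 0 < δ ∧ ∀ s, |s - t| ≤ δ → |φ s - φ t| ≤ ε := by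
  obtain ⟨δ, hδ, h⟩ := Metric.continuous_iff.mp φ.continuous t ε hε
  refine ⟨δ / 2, by linarith, fun s hs => ?_⟩
  have := h s (by rw [Real.dist_eq]; linarith)
  rw [Real.dist_eq] at this
  linarith

section Punct

lemma vanish_punct (H : SimpleQIHyp τ k) (u : C_c(X, ℝ)) (hm : tpos τ k (-u) = 0)
    {ψ : C(ℝ, ℝ)} (hψ0 : ψ 0 = 0) (hψpos : ∀ s, 0 ≤ ψ s) {δ : ℝ} (hδ : 0 < δ)
    (hvan : ∀ s, |s - tpos τ k u| ≤ δ → ψ s = 0) : τ (compCc ψ hψ0 u) = 0 := by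
  have ht0 : 0 ≤ tpos τ k u := tpos_nonneg u H
  set t := tpos τ k u with htdef
  have key : ∀ ε : ℝ, 0 < ε → τ (compCc ψ hψ0 u) ≤ ε * k.toReal := by
    intro ε hε
    obtain ⟨δ₀, hδ₀pos, hδ₀⟩ : ∃ δ₀ : ℝ, 0 < δ₀ ∧ ∀ s, |s| ≤ δ₀ → ψ s ≤ ε := by
      obtain ⟨δ₀, hpos, h⟩ := cont_near ψ 0 hε
      exact ⟨δ₀, hpos, fun s hs => by
        have := h s (by simpa using hs)
        rw [hψ0, sub_zero] at this
        exact (le_abs_self _).trans this⟩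
    set θ₀ : C(ℝ, ℝ) := ⟨fun s => ramp (δ₀ / 2) δ₀ |s|,
      (ramp (δ₀ / 2) δ₀).continuous.comp continuous_abs⟩ with hθ₀def
    have hθ₀app : ∀ s, θ₀ s = ramp (δ₀ / 2) δ₀ |s| := fun s => rfl
    set cR : C(ℝ, ℝ) := ramp t (t + δ / 2) with hcRdef
    set cL : C(ℝ, ℝ) := ⟨fun s => ramp (δ₀ / 4) (δ₀ / 2) (-s),
      (ramp (δ₀ / 4) (δ₀ / 2)).continuous.comp continuous_neg⟩ with hcLdef
    have hcLapp : ∀ s, cL s = ramp (δ₀ / 4) (δ₀ / 2) (-s) := fun s => rfl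
    -- pieces
    set p1 : C(ℝ, ℝ) := ⟨fun s => ψ s * (1 - θ₀ s),
      ψ.continuous.mul (continuous_const.sub θ₀.continuous)⟩ with hp1def
    have hp10 : p1 0 = 0 := by simp [hp1def, hψ0]
    set phat : C(ℝ, ℝ) := ⟨fun s => ψ s * θ₀ s, ψ.continuous.mul θ₀.continuous⟩ with hphatdef
    have hphat0 : phat 0 = 0 := by simp [hphatdef, hψ0]
    set pR : C(ℝ, ℝ) := ⟨fun s => phat s * cR s, phat.continuous.mul cR.continuous⟩ with hpRdef
    have hpR0 : pR 0 = 0 := by simp [hpRdef, hphat0]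
    set rest : C(ℝ, ℝ) := ⟨fun s => phat s * (1 - cR s),
      phat.continuous.mul (continuous_const.sub cR.continuous)⟩ with hrestdef
    have hrest0 : rest 0 = 0 := by simp [hrestdef, hphat0]
    set pL : C(ℝ, ℝ) := ⟨fun s => rest s * cL s, rest.continuous.mul cL.continuous⟩ with hpLdef
    have hpL0 : pL 0 = 0 := by simp [hpLdef, hrest0]
    set pM : C(ℝ, ℝ) := ⟨fun s => rest s * (1 - cL s),
      rest.continuous.mul (continuous_const.sub cL.continuous)⟩ with hpMdef
    have hpM0 : pM 0 = 0 := by simp [hpMdef, hrest0]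
    -- splits
    have hsplit1 : τ (compCc ψ hψ0 u) = τ (compCc p1 hp10 u) + τ (compCc phat hphat0 u) :=
      qi_split H.hqi u hp10 hphat0 hψ0 (fun s => by
        show ψ s = ψ s * (1 - θ₀ s) + ψ s * θ₀ s; ring)
    have hsplit2 : τ (compCc phat hphat0 u) = τ (compCc pR hpR0 u) + τ (compCc rest hrest0 u) :=
      qi_split H.hqi u hpR0 hrest0 hphat0 (fun s => by
        show phat s = phat s * cR s + phat s * (1 - cR s); ring)
    have hsplit3 : τ (compCc rest hrest0 u) = τ (compCc pL hpL0 u) + τ (compCc pM hpM0 u) :=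
      qi_split H.hqi u hpL0 hpM0 hrest0 (fun s => by
        show rest s = rest s * cL s + rest s * (1 - cL s); ring)
    -- piece bounds
    have hθ₀mem : ∀ s, 0 ≤ θ₀ s ∧ θ₀ s ≤ 1 := fun s =>
      ⟨ramp_nonneg _ _ _, ramp_le_one _ _ _⟩
    have hp1bound : τ (compCc p1 hp10 u) ≤ ε * k.toReal := by
      refine qi_le_bound H.hqi hε.le H.kr_pos.le (fun x => ?_) (fun x => ?_) H.qiOpen_univ_le
      · exact mul_nonneg (hψpos _) (by linarith [(hθ₀mem (u x)).2])
      · show ψ (u x) * (1 - θ₀ (u x)) ≤ ε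
        rcases le_or_gt |u x| δ₀ with hc | hc
        · have h1 : ψ (u x) ≤ ε := hδ₀ _ hc
          have h2 := (hθ₀mem (u x)).1
          have h3 := (hθ₀mem (u x)).2
          have h4 := hψpos (u x)
          nlinarith
        · have : θ₀ (u x) = 1 := by
            rw [hθ₀app]
            exact ramp_of_ge (by linarith) hc.le
          rw [this]
          simpa using hε.le
    have hpRzero : τ (compCc pR hpR0 u) = 0 := by
      refine vanish_right H u hpR0 (fun s => ?_) (show tpos τ k u < t + δ by linarith [htdef])
        (fun s hs => ?_)
      · exact mul_nonneg (mul_nonneg (hψpos _) (hθ₀mem s).1) (ramp_nonneg _ _ _)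
      · rcases le_or_gt s t with hst | hst
        · show phat s * cR s = 0
          rw [hcRdef, ramp_of_le (by linarith) hst, mul_zero]
        · have : ψ s = 0 := hvan s (by rw [abs_le]; constructor <;> linarith)
          show ψ s * θ₀ s * cR s = 0
          rw [this, zero_mul, zero_mul]
    have hpLzero : τ (compCc pL hpL0 u) = 0 := by
      refine vanish_left H u hpL0 (fun s => ?_) (show -(δ₀/4) < 0 by linarith)
        (by rw [hm]; linarith) (fun s hs => ?_)
      · exact mul_nonneg (mul_nonneg (mul_nonneg (hψpos _) (hθ₀mem s).1)
          (by linarith [ramp_le_one t (t + δ/2) s, (show cR s = ramp t (t+δ/2) s from rfl)]))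
          (ramp_nonneg _ _ _)
      · show rest s * cL s = 0
        rw [hcLapp, ramp_of_le (by linarith) (by linarith), mul_zero]
    have hpMzero : τ (compCc pM hpM0 u) = 0 := by
      refine vanish_band H u hpM0 (fun s => ?_) (show (0:ℝ) < δ₀/2 by linarith)
        (show t - δ < tpos τ k u by linarith [htdef]) (fun s hs => ?_)
      · refine mul_nonneg (mul_nonneg (mul_nonneg (hψpos _) (hθ₀mem s).1) ?_) ?_
        · linarith [ramp_le_one t (t + δ/2) s, (show cR s = ramp t (t+δ/2) s from rfl)]
        · linarith [ramp_le_one (δ₀/4) (δ₀/2) (-s), hcLapp s]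
      · rcases hs with hs | hs
        · rcases le_or_gt s (-(δ₀/2)) with hc | hc
          · have : cL s = 1 := by rw [hcLapp]; exact ramp_of_ge (by linarith) (by linarith)
            show rest s * (1 - cL s) = 0
            rw [this]; ring
          · have : θ₀ s = 0 := by
              rw [hθ₀app]
              refine ramp_of_le (by linarith) ?_
              rw [abs_le]; constructor <;> linarith
            show ψ s * θ₀ s * (1 - cR s) * (1 - cL s) = 0
            rw [this]; ring
        · rcases lt_or_ge s (t + δ) with hc | hc
          · have : ψ s = 0 := hvan s (by rw [abs_le]; constructor <;> linarith)
            show ψ s * θ₀ s * (1 - cR s) * (1 - cL s) = 0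
            rw [this]; ring
          · have : cR s = 1 := by
              show ramp t (t + δ/2) s = 1
              exact ramp_of_ge (by linarith) (by linarith)
            show ψ s * θ₀ s * (1 - cR s) * (1 - cL s) = 0
            rw [this]; ring
    rw [hsplit1, hsplit2, hsplit3, hpRzero, hpLzero, hpMzero]
    simpa using hp1bound
  have hle : τ (compCc ψ hψ0 u) ≤ 0 := by
    by_contra hc
    push_neg at hc
    have hkr := H.kr_pos
    have := key (τ (compCc ψ hψ0 u) / (2 * k.toReal)) (by positivity)
    rw [div_mul_eq_mul_div, mul_div_assoc] at this
    have h2 : k.toReal / (2 * k.toReal) = 1/2 := by field_simp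
    rw [h2] at this
    linarith
  exact le_antisymm hle (H.hqi.pos _ (fun x => hψpos _))

lemma vanish_punct' (H : SimpleQIHyp τ k) (u : C_c(X, ℝ)) (hm : tpos τ k (-u) = 0)
    {ζ : C(ℝ, ℝ)} (hζ0 : ζ 0 = 0) {δ : ℝ} (hδ : 0 < δ)
    (hvan : ∀ s, |s - tpos τ k u| ≤ δ → ζ s = 0) : τ (compCc ζ hζ0 u) = 0 := by
  set ζp : C(ℝ, ℝ) := ⟨fun s => max (ζ s) 0, (ζ.continuous.max continuous_const)⟩ with hζpdef
  set ζn : C(ℝ, ℝ) := ⟨fun s => max (-ζ s) 0, ((continuous_neg.comp ζ.continuous).max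
    continuous_const)⟩ with hζndef
  have hζp0 : ζp 0 = 0 := by simp [hζpdef, hζ0]
  have hζn0 : ζn 0 = 0 := by simp [hζndef, hζ0]
  have hsplit : τ (compCc ζp hζp0 u) = τ (compCc ζ hζ0 u) + τ (compCc ζn hζn0 u) :=
    qi_split H.hqi u hζ0 hζn0 hζp0 (fun s => by
      show max (ζ s) 0 = ζ s + max (-ζ s) 0
      rcases le_total (ζ s) 0 with h | h
      · rw [max_eq_right h, max_eq_left (by linarith)]; ring
      · rw [max_eq_left h, max_eq_right (by linarith)]; ring)
  have hp : τ (compCc ζp hζp0 u) = 0 :=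
    vanish_punct H u hm hζp0 (fun s => le_max_right _ _) hδ
      (fun s hs => by show max (ζ s) 0 = 0; rw [hvan s hs]; simp)
  have hn : τ (compCc ζn hζn0 u) = 0 :=
    vanish_punct H u hm hζn0 (fun s => le_max_right _ _) hδ
      (fun s hs => by show max (-ζ s) 0 = 0; rw [hvan s hs]; simp)
  rw [hp, hn] at hsplit
  linarith

end Punct

end QLF
namespace QLF

open Set Topology

variable {X : Type*} [TopologicalSpace X] {τ : C_c(X, ℝ) → ℝ} {k : ℝ≥0∞}

section ChiValue

/-- The bump used to witness the value of the functional at level `t`. -/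
noncomputable def chiAt (t : ℝ) : C(ℝ, ℝ) := bump (t/2) (3*t/4) (5*t/4) (3*t/2)

lemma chiAt_zero {t : ℝ} (ht : 0 < t) : chiAt t 0 = 0 :=
  bump_eq_zero_left (by linarith) (by linarith)

lemma chiAt_one {t s : ℝ} (ht : 0 < t) (h1 : 3*t/4 ≤ s) (h2 : s ≤ 5*t/4) : chiAt t s = 1 :=
  bump_eq_one (by linarith) (by linarith) h1 h2

lemma chiAt_mem (t s : ℝ) : 0 ≤ chiAt t s ∧ chiAt t s ≤ 1 :=
  ⟨bump_nonneg _ _ _ _ _, bump_le_one _ _ _ _ _⟩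

lemma chi_value (H : SimpleQIHyp τ k) (u : C_c(X, ℝ)) (hm : tpos τ k (-u) = 0)
    (ht : 0 < tpos τ k u) :
    τ (compCc (chiAt (tpos τ k u)) (chiAt_zero ht) u) = k.toReal := by
  set t := tpos τ k u with htdef
  -- the inner bump θ
  set θ : C(ℝ, ℝ) := bump (3*t/4) (7*t/8) (9*t/8) (5*t/4) with hθdef
  have hθ0 : θ 0 = 0 := bump_eq_zero_left (by linarith) (by linarith)
  have hθmem : ∀ s, 0 ≤ θ s ∧ θ s ≤ 1 := fun s =>
    ⟨bump_nonneg _ _ _ _ _, bump_le_one _ _ _ _ _⟩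
  -- the set V* has measure k
  set V : Set X := {x | 7*t/8 < u x ∧ u x < 9*t/8} with hVdef
  have hVopen : IsOpen V :=
    (isOpen_level u _).inter (isOpen_lt u.continuous continuous_const)
  set F : Set X := {x | 9*t/8 ≤ u x} with hFdef
  have hFclosed : IsClosed F := isClosed_le continuous_const u.continuous
  have hFcpt : IsCompact F := by
    refine IsCompact.of_isClosed_subset u.hasCompactSupport' hFclosed ?_
    intro x hx
    have hne : u x ≠ 0 := by
      intro h0
      rw [hFdef, mem_setOf_eq, h0] at hx
      linarith
    exact subset_tsupport _ hne
  have hunion : F ∪ V = {x | 7*t/8 < u x} := by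
    ext x
    simp only [hFdef, hVdef, mem_union, mem_setOf_eq]
    constructor
    · rintro (h | ⟨h1, h2⟩)
      · linarith
      · exact h1
    · intro h
      rcases lt_or_ge (u x) (9*t/8) with h2 | h2
      · exact Or.inr ⟨h, h2⟩
      · exact Or.inl h2
  have hA : qiMeas τ {x | 7*t/8 < u x} = k := level_full u H (by linarith) (by linarith)
  have hFnull : qiMeas τ F = 0 := by
    have hsub : F ⊆ {x | 17*t/16 < u x} := by
      intro x hx
      rw [hFdef, mem_setOf_eq] at hx
      rw [mem_setOf_eq]
      linarith
    have := (qiMeas_mono hsub).trans (level_null u H (by linarith) (by linarith)).le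
    exact le_zero_iff.mp this
  have hdisj : Disjoint F V := by
    rw [Set.disjoint_left]
    rintro x hx ⟨h1, h2⟩
    rw [hFdef, mem_setOf_eq] at hx
    linarith
  have hVfull : qiMeas τ V = k := by
    have hsum := H.hadd F V hdisj (Or.inl hFcpt) (Or.inr hVopen)
      (by rw [hunion]; exact Or.inr (isOpen_level u _))
    rw [hunion, hA, hFnull, zero_add] at hsum
    exact hsum.symm
  -- lower bound for τ (θ ∘ u)
  have hθtest : ∀ x, 0 ≤ compCc θ hθ0 u x ∧ compCc θ hθ0 u x ≤ 1 := fun x => hθmem (u x)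
  have hlow : k.toReal ≤ τ (compCc θ hθ0 u) := by
    by_contra hcon
    push_neg at hcon
    set ε := k.toReal - τ (compCc θ hθ0 u) with hεdef
    have hε : 0 < ε := by rw [hεdef]; linarith
    have hτθ0 : 0 ≤ τ (compCc θ hθ0 u) := H.hqi.pos _ fun x => (hθmem _).1
    have hrlt : ENNReal.ofReal (τ (compCc θ hθ0 u)) < qiOpen τ V := by
      rw [← qiMeas_open hVopen, hVfull, ← H.k_eq]
      exact (ENNReal.ofReal_lt_ofReal_iff H.kr_pos).mpr (by linarith)
    obtain ⟨g, hgtest, hgsub, hglt⟩ := exists_test_gt hτθ0 hrlt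
    have hle : τ g ≤ τ (compCc θ hθ0 u) := by
      refine qi_special_mono H.hqi hgtest hθtest ?_
      intro x hx
      have hxV := hgsub hx
      rw [hVdef, mem_setOf_eq] at hxV
      show θ (u x) = 1
      rw [hθdef]
      exact bump_eq_one (by linarith) (by linarith) hxV.1.le hxV.2.le
    linarith
  -- upper bound for χ and monotonicity
  have hχmem := fun s => chiAt_mem t s
  have hup : τ (compCc (chiAt t) (chiAt_zero ht) u) ≤ 1 * k.toReal := by
    refine qi_le_bound H.hqi zero_le_one H.kr_pos.le (fun x => (hχmem (u x)).1)
      (fun x => (hχmem (u x)).2) H.qiOpen_univ_le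
  have hmono : τ (compCc θ hθ0 u) ≤ τ (compCc (chiAt t) (chiAt_zero ht) u) := by
    refine qi_compCc_mono H.hqi u hθ0 (chiAt_zero ht) (fun s => ?_)
    rcases le_or_gt s (3*t/4) with hc | hc
    · rw [hθdef, bump_eq_zero_left (by linarith) hc]
      exact (chiAt_mem t s).1
    · rcases le_or_gt s (5*t/4) with hc2 | hc2
      · rw [chiAt_one ht hc.le hc2]
        exact (hθmem s).2
      · rw [hθdef, bump_eq_zero_right (by linarith) (by linarith)]
        exact (chiAt_mem t s).1
  rw [one_mul] at hup
  linarith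

end ChiValue

section MIMain

lemma mi_nonneg (H : SimpleQIHyp τ k) (u : C_c(X, ℝ)) (hm : tpos τ k (-u) = 0)
    (φ : C(ℝ, ℝ)) (hφ : φ 0 = 0) :
    τ (compCc φ hφ u) = k.toReal * φ (tpos τ k u) := by
  have ht0 : 0 ≤ tpos τ k u := tpos_nonneg u H
  rcases ht0.eq_or_lt with ht | ht
  · -- t = 0
    rw [← ht, hφ, mul_zero]
    have key : ∀ ε : ℝ, 0 < ε → |τ (compCc φ hφ u)| ≤ ε * k.toReal := by
      intro ε hε
      obtain ⟨δ₂, hδ₂pos, hδ₂⟩ := cont_near φ 0 hε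
      simp only [hφ, sub_zero] at hδ₂
      set θ : C(ℝ, ℝ) := ⟨fun s => ramp (δ₂/2) δ₂ |s|,
        (ramp (δ₂/2) δ₂).continuous.comp continuous_abs⟩ with hθdef
      have hθapp : ∀ s, θ s = ramp (δ₂/2) δ₂ |s| := fun s => rfl
      set p1 : C(ℝ, ℝ) := ⟨fun s => φ s * (1 - θ s),
        φ.continuous.mul (continuous_const.sub θ.continuous)⟩ with hp1def
      have hp10 : p1 0 = 0 := by simp [hp1def, hφ]
      set p2 : C(ℝ, ℝ) := ⟨fun s => φ s * θ s, φ.continuous.mul θ.continuous⟩ with hp2def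
      have hp20 : p2 0 = 0 := by simp [hp2def, hφ]
      have hsplit : τ (compCc φ hφ u) = τ (compCc p1 hp10 u) + τ (compCc p2 hp20 u) :=
        qi_split H.hqi u hp10 hp20 hφ (fun s => by
          show φ s = φ s * (1 - θ s) + φ s * θ s; ring)
      have h2 : τ (compCc p2 hp20 u) = 0 := by
        refine vanish_punct' H u hm hp20 (show (0:ℝ) < δ₂/2 by linarith) (fun s hs => ?_)
        rw [← ht, sub_zero] at hs
        show φ s * θ s = 0
        have : θ s = 0 := by
          rw [hθapp]
          exact ramp_of_le (by linarith) hs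
        rw [this, mul_zero]
      have h1 : |τ (compCc p1 hp10 u)| ≤ ε * k.toReal := by
        refine qi_small H u hp10 (fun s => ?_)
        show |φ s * (1 - θ s)| ≤ ε
        rcases le_or_gt |s| δ₂ with hc | hc
        · have hb1 : |φ s| ≤ ε := hδ₂ s hc
          have hb2 : 0 ≤ θ s := by rw [hθapp]; exact ramp_nonneg _ _ _
          have hb3 : θ s ≤ 1 := by rw [hθapp]; exact ramp_le_one _ _ _
          rw [abs_mul]
          have : |1 - θ s| ≤ 1 := by rw [abs_le]; constructor <;> linarith
          nlinarith [abs_nonneg (φ s)]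
        · have : θ s = 1 := by rw [hθapp]; exact ramp_of_ge (by linarith) hc.le
          rw [this]
          simp [hε.le]
      rw [hsplit, h2, add_zero]
      exact h1
    by_contra hc
    have habs : 0 < |τ (compCc φ hφ u)| := abs_pos.mpr hc
    have hkr := H.kr_pos
    have := key (|τ (compCc φ hφ u)| / (2 * k.toReal)) (by positivity)
    rw [div_mul_eq_mul_div, mul_div_assoc] at this
    have h2 : k.toReal / (2 * k.toReal) = 1/2 := by field_simp
    rw [h2] at this
    linarith
  · -- 0 < t
    set t := tpos τ k u with htdef
    set χ := chiAt t with hχdef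
    have hχ0 : χ 0 = 0 := chiAt_zero ht
    have hχt : χ t = 1 := chiAt_one ht (by linarith) (by linarith)
    set ζ : C(ℝ, ℝ) := φ - (φ t) • χ with hζdef
    have hζapp : ∀ s, ζ s = φ s - φ t * χ s := fun s => by
      simp [hζdef]
    have hζ0 : ζ 0 = 0 := by rw [hζapp, hφ, hχ0, mul_zero, sub_zero]
    have hζt : ζ t = 0 := by rw [hζapp, hχt, mul_one, sub_self]
    have hsmul0 : ((φ t) • χ) 0 = 0 := by
      simp [hχ0]
    have hsplit : τ (compCc φ hφ u) = τ (compCc ζ hζ0 u) + τ (compCc ((φ t) • χ) hsmul0 u) :=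
      qi_split H.hqi u hζ0 hsmul0 hφ (fun s => by simp [hζapp])
    have hsm : τ (compCc ((φ t) • χ) hsmul0 u) = φ t * τ (compCc χ hχ0 u) := by
      have heq : compCc ((φ t) • χ) hsmul0 u = (φ t) • compCc χ hχ0 u := by
        ext x
        simp
      rw [heq, H.hqi.smul]
    have hχval : τ (compCc χ hχ0 u) = k.toReal := chi_value H u hm ht
    have hζzero : τ (compCc ζ hζ0 u) = 0 := by
      have key : ∀ ε : ℝ, 0 < ε → |τ (compCc ζ hζ0 u)| ≤ ε * k.toReal := by
        intro ε hε
        obtain ⟨δ₂, hδ₂pos, hδ₂⟩ := cont_near ζ t hε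
        rw [hζt] at hδ₂
        simp only [sub_zero] at hδ₂
        set ξ : C(ℝ, ℝ) := bump (t - δ₂) (t - δ₂/2) (t + δ₂/2) (t + δ₂) with hξdef
        have hξmem : ∀ s, 0 ≤ ξ s ∧ ξ s ≤ 1 := fun s =>
          ⟨bump_nonneg _ _ _ _ _, bump_le_one _ _ _ _ _⟩
        set q1 : C(ℝ, ℝ) := ⟨fun s => ζ s * ξ s, ζ.continuous.mul ξ.continuous⟩ with hq1def
        have hq10 : q1 0 = 0 := by simp [hq1def, hζ0]
        set q2 : C(ℝ, ℝ) := ⟨fun s => ζ s * (1 - ξ s),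
          ζ.continuous.mul (continuous_const.sub ξ.continuous)⟩ with hq2def
        have hq20 : q2 0 = 0 := by simp [hq2def, hζ0]
        have hsplit2 : τ (compCc ζ hζ0 u) = τ (compCc q1 hq10 u) + τ (compCc q2 hq20 u) :=
          qi_split H.hqi u hq10 hq20 hζ0 (fun s => by
            show ζ s = ζ s * ξ s + ζ s * (1 - ξ s); ring)
        have h2 : τ (compCc q2 hq20 u) = 0 := by
          refine vanish_punct' H u hm hq20 (show (0:ℝ) < δ₂/2 by linarith) (fun s hs => ?_)
          show ζ s * (1 - ξ s) = 0
          have habs := abs_le.mp hs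
          have : ξ s = 1 := by
            rw [hξdef]
            exact bump_eq_one (by linarith) (by linarith) (by linarith [habs.1])
              (by linarith [habs.2])
          rw [this]
          ring
        have h1 : |τ (compCc q1 hq10 u)| ≤ ε * k.toReal := by
          refine qi_small H u hq10 (fun s => ?_)
          show |ζ s * ξ s| ≤ ε
          rcases le_or_gt |s - t| δ₂ with hc | hc
          · have hb1 : |ζ s| ≤ ε := hδ₂ s hc
            rw [abs_mul]
            have hξ1 := (hξmem s).1
            have hξ2 := (hξmem s).2
            have : |ξ s| ≤ 1 := by rw [abs_le]; constructor <;> linarith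
            nlinarith [abs_nonneg (ζ s)]
          · have : ξ s = 0 := by
              rcases lt_or_ge s t with hlt | hge
              · refine bump_eq_zero_left (by linarith) ?_
                rw [abs_sub_comm, abs_of_pos (by linarith : 0 < t - s)] at hc
                linarith
              · refine bump_eq_zero_right (by linarith) ?_
                rw [abs_of_nonneg (by linarith : 0 ≤ s - t)] at hc
                linarith
            rw [this, mul_zero, abs_zero]
            positivity
        rw [hsplit2, h2, add_zero]
        exact h1
      by_contra hc
      have habs : 0 < |τ (compCc ζ hζ0 u)| := abs_pos.mpr hc
      have hkr := H.kr_pos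
      have := key (|τ (compCc ζ hζ0 u)| / (2 * k.toReal)) (by positivity)
      rw [div_mul_eq_mul_div, mul_div_assoc] at this
      have h2 : k.toReal / (2 * k.toReal) = 1/2 := by field_simp
      rw [h2] at this
      linarith
    rw [hsplit, hζzero, hsm, hχval, zero_add]
    ring

/-- The master identity for a quasi-integral with two-valued additive measure. -/
lemma qi_mi (H : SimpleQIHyp τ k) (u : C_c(X, ℝ)) (φ : C(ℝ, ℝ)) (hφ : φ 0 = 0) :
    τ (compCc φ hφ u) = k.toReal * φ (τ u / k.toReal) := by
  have key : ∀ (v : C_c(X, ℝ)) (ψ : C(ℝ, ℝ)) (hψ : ψ 0 = 0),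
      τ (compCc ψ hψ v) = k.toReal * ψ (tval τ k v) := by
    intro v ψ hψ
    rcases tpos_or v H with hm | hm
    · rw [tval, hm, sub_zero]
      exact mi_nonneg H v hm ψ hψ
    · set ψ' : C(ℝ, ℝ) := ψ.comp ⟨fun s => -s, continuous_neg⟩ with hψ'def
      have hψ'app : ∀ s, ψ' s = ψ (-s) := fun s => rfl
      have hψ'0 : ψ' 0 = 0 := by rw [hψ'app, neg_zero, hψ]
      have heq : compCc ψ hψ v = compCc ψ' hψ'0 (-v) := by
        ext x
        show ψ (v x) = ψ' ((-v) x)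
        rw [hψ'app]
        congr 1
        show v x = -((-v) x)
        show v x = -(-(v x))
        rw [neg_neg]
      have hmm : tpos τ k (- (-v)) = 0 := by rw [neg_neg]; exact hm
      rw [heq, mi_nonneg H (-v) hmm ψ' hψ'0, hψ'app]
      have htv : tval τ k v = -(tpos τ k (-v)) := by rw [tval, hm]; ring
      rw [htv]
  have hu : τ u = k.toReal * tval τ k u := by
    have hid : (⟨fun s => s, continuous_id⟩ : C(ℝ, ℝ)) 0 = 0 := rfl
    have h := key u ⟨fun s => s, continuous_id⟩ hid
    have hcu : compCc ⟨fun s => s, continuous_id⟩ hid u = u := by ext x; rfl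
    rw [hcu] at h
    exact h
  rw [key u φ hφ, hu, mul_div_cancel_left₀ _ (ne_of_gt H.kr_pos)]

end MIMain

end QLF
namespace QLF

open Set Topology

variable {X : Type*} [TopologicalSpace X]

/-- A quasi-integral satisfying the master identity with constant `kr`. -/
structure MIHyp (τ : C_c(X, ℝ) → ℝ) (kr : ℝ) : Prop where
  hqi : IsQuasiIntegral τ
  hkr : 0 < kr
  mi : ∀ (u : C_c(X, ℝ)) (φ : C(ℝ, ℝ)) (hφ : φ 0 = 0),
    τ (compCc φ hφ u) = kr * φ (τ u / kr)

lemma SimpleQIHyp.toMIHyp {τ : C_c(X, ℝ) → ℝ} {k : ℝ≥0∞} (H : SimpleQIHyp τ k) :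
    MIHyp τ k.toReal := ⟨H.hqi, H.kr_pos, fun u φ hφ => qi_mi H u φ hφ⟩

namespace MIHyp

variable {τ : C_c(X, ℝ) → ℝ} {kr : ℝ}

lemma qi_neg (M : MIHyp τ kr) (u : C_c(X, ℝ)) : τ (-u) = -τ u := by
  have hneg : (-1 : ℝ) • u = -u := by
    ext x
    simp
  have h := M.hqi.smul (-1) u
  rw [hneg] at h
  rw [h]
  ring

/-- A test function has value at most `kr`. -/
lemma test_le (M : MIHyp τ kr) {f : C_c(X, ℝ)} (hf : ∀ x, 0 ≤ f x ∧ f x ≤ 1) :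
    τ f ≤ kr := by
  set φ : C(ℝ, ℝ) := ⟨fun s => max (s - 1) 0, by fun_prop⟩ with hφdef
  have hφ0 : φ 0 = 0 := by simp [hφdef]
  have hzero : compCc φ hφ0 f = 0 := by
    ext x
    show max (f x - 1) 0 = 0
    rw [max_eq_right (by linarith [(hf x).2])]
  have h := M.mi f φ hφ0
  rw [hzero, qi_zero M.hqi] at h
  rw [show φ (τ f / kr) = max (τ f / kr - 1) 0 from rfl] at h
  have hkr := M.hkr
  have hm : max (τ f / kr - 1) 0 = 0 := by
    rcases (le_max_right (τ f / kr - 1) 0).eq_or_lt with he | hl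
    · exact he.symm
    · exfalso
      nlinarith [mul_pos hkr hl]
  have h2 : τ f / kr ≤ 1 := by
    by_contra hc
    push_neg at hc
    rw [max_eq_left (by linarith)] at hm
    linarith
  calc τ f = (τ f / kr) * kr := by field_simp
  _ ≤ 1 * kr := by nlinarith
  _ = kr := one_mul kr

lemma qiOpen_le (M : MIHyp τ kr) (U : Set X) : qiOpen τ U ≤ ENNReal.ofReal kr :=
  iSup₂_le fun f hf => ENNReal.ofReal_le_ofReal (M.test_le hf.1)

lemma qiMeas_le (M : MIHyp τ kr) (A : Set X) : qiMeas τ A ≤ ENNReal.ofReal kr := by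
  have := qiMeas_mono (τ := τ) (subset_univ A)
  rw [qiMeas_open isOpen_univ] at this
  exact this.trans (M.qiOpen_le _)

/-- Boosting: a set of positive measure contains a test of exact value `kr`. -/
lemma exists_exact_test (M : MIHyp τ kr) {U : Set X} (hpos : 0 < qiOpen τ U) :
    ∃ g : C_c(X, ℝ), (∀ x, 0 ≤ g x ∧ g x ≤ 1) ∧ tsupport g ⊆ U ∧ τ g = kr := by
  obtain ⟨g₀, hg₀test, hg₀sub, hg₀pos⟩ := exists_test_gt le_rfl (by simpa using hpos)
  set t₀ := τ g₀ / kr with ht₀def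
  have ht₀ : 0 < t₀ := div_pos hg₀pos M.hkr
  set φ := ramp (t₀/4) (t₀/2) with hφdef
  have hφ0 : φ 0 = 0 := ramp_of_le (by linarith) (by linarith)
  refine ⟨compCc φ hφ0 g₀, fun x => ⟨ramp_nonneg _ _ _, ramp_le_one _ _ _⟩, ?_, ?_⟩
  · refine subset_trans (closure_minimal ?_ (isClosed_tsupport (⇑g₀))) hg₀sub
    intro x hx
    have hx' : φ (g₀ x) ≠ 0 := hx
    have : g₀ x ≠ 0 := by
      intro h0
      rw [h0] at hx'
      exact hx' hφ0
    exact subset_tsupport _ this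
  · rw [M.mi g₀ φ hφ0, ← ht₀def, hφdef, ramp_of_ge (by linarith) (by linarith), mul_one]

/-- Two-valuedness on open sets. -/
lemma open_two_valued (M : MIHyp τ kr) {U : Set X} (hU : IsOpen U) :
    qiMeas τ U = 0 ∨ qiMeas τ U = ENNReal.ofReal kr := by
  rcases eq_or_lt_of_le ((zero_le : 0 ≤ qiMeas τ U)) with h | h
  · exact Or.inl h.symm
  · right
    rw [qiMeas_open hU] at h ⊢
    obtain ⟨g, hgtest, hgsub, hgval⟩ := M.exists_exact_test h
    refine le_antisymm (M.qiOpen_le U) ?_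
    have := le_qiOpen (τ := τ) hgtest hgsub
    rw [hgval] at this
    exact this

/-- Two-valuedness on open or closed sets. -/
lemma two_valued (M : MIHyp τ kr) {A : Set X} (hA : IsOpen A ∨ IsClosed A) :
    qiMeas τ A = 0 ∨ qiMeas τ A = ENNReal.ofReal kr := by
  rcases hA with hA | hA
  · exact M.open_two_valued hA
  · by_cases hA' : IsOpen A
    · exact M.open_two_valued hA'
    · rw [qiMeas, if_neg hA']
      by_cases hex : ∃ U : Set X, (IsOpen U ∧ A ⊆ U) ∧ qiOpen τ U = 0
      · obtain ⟨U, hU, hU0⟩ := hex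
        left
        refine le_antisymm ?_ zero_le
        exact (iInf₂_le U hU).trans hU0.le
      · push_neg at hex
        right
        refine le_antisymm ((iInf₂_le Set.univ ⟨isOpen_univ, subset_univ _⟩).trans
          (M.qiOpen_le _)) ?_
        refine le_iInf₂ fun U hU => ?_
        rcases M.open_two_valued hU.1 with h | h
        · rw [qiMeas_open hU.1] at h
          exact absurd h (hex U hU)
        · rw [qiMeas_open hU.1] at h
          exact h.ge

/-- Level sets above the value are null. -/
lemma level_null' (M : MIHyp τ kr) (u : C_c(X, ℝ)) {s : ℝ} (hs0 : 0 < s)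
    (hst : τ u / kr < s) : qiMeas τ {x | s < u x} = 0 := by
  set t := τ u / kr with htdef
  set s₂ := (max t 0 + s) / 2 with hs₂def
  have hs₂1 : max t 0 < s₂ := by
    rw [hs₂def]
    have := le_max_left t 0
    have := le_max_right t 0
    have : max t 0 < s := max_lt hst hs0
    linarith
  have hs₂2 : s₂ < s := by
    rw [hs₂def]
    have : max t 0 < s := max_lt hst hs0
    linarith
  have hs₂0 : 0 < s₂ := lt_of_le_of_lt (le_max_right t 0) hs₂1
  set θ := ramp s₂ s with hθdef
  have hθ0 : θ 0 = 0 := ramp_of_le hs₂2 hs₂0.le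
  have hθval : τ (compCc θ hθ0 u) = 0 := by
    rw [M.mi u θ hθ0, ← htdef, hθdef, ramp_of_le hs₂2 (le_trans (le_max_left t 0) hs₂1.le),
      mul_zero]
  rw [qiMeas_open (isOpen_level u s)]
  refine le_antisymm (iSup₂_le fun g hg => ?_) zero_le
  have hle : τ g ≤ τ (compCc θ hθ0 u) := by
    refine qi_special_mono M.hqi hg.1 (fun x => ⟨ramp_nonneg _ _ _, ramp_le_one _ _ _⟩) ?_
    intro x hx
    have hxU := hg.2 hx
    rw [mem_setOf_eq] at hxU
    show θ (u x) = 1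
    rw [hθdef]
    exact ramp_of_ge hs₂2 hxU.le
  rw [hθval] at hle
  simp [ENNReal.ofReal_eq_zero.mpr hle]

/-- Level sets below the value are full. -/
lemma level_full' (M : MIHyp τ kr) (u : C_c(X, ℝ)) {s : ℝ} (hs0 : 0 < s)
    (hst : s < τ u / kr) : qiMeas τ {x | s < u x} = ENNReal.ofReal kr := by
  set t := τ u / kr with htdef
  set s₁ := (2*s + t) / 3 with hs₁def
  set s₂ := (s + 2*t) / 3 with hs₂def
  have h1 : s < s₁ := by rw [hs₁def]; linarith
  have h2 : s₁ < s₂ := by rw [hs₁def, hs₂def]; linarith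
  have h3 : s₂ < t := by rw [hs₂def]; linarith
  set φ := ramp s₁ s₂ with hφdef
  have hφ0 : φ 0 = 0 := ramp_of_le h2 (by linarith)
  have hval : τ (compCc φ hφ0 u) = kr := by
    rw [M.mi u φ hφ0, ← htdef, hφdef, ramp_of_ge h2 h3.le, mul_one]
  refine le_antisymm (by rw [qiMeas_open (isOpen_level u s)]; exact M.qiOpen_le _) ?_
  rw [qiMeas_open (isOpen_level u s)]
  have hsub : tsupport (⇑(compCc φ hφ0 u)) ⊆ {x | s < u x} := by
    have hcl : IsClosed {x | s₁ ≤ u x} := isClosed_le continuous_const u.continuous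
    have hsup : Function.support (⇑(compCc φ hφ0 u)) ⊆ {x | s₁ ≤ u x} := by
      intro x hx
      have hx' : φ (u x) ≠ 0 := hx
      rw [mem_setOf_eq]
      by_contra hc
      push_neg at hc
      exact hx' (ramp_of_le h2 hc.le)
    refine subset_trans (closure_minimal hsup hcl) ?_
    intro x hx
    rw [mem_setOf_eq] at hx ⊢
    linarith
  have := le_qiOpen (τ := τ) (fun x => ⟨ramp_nonneg _ _ _, ramp_le_one _ _ _⟩) hsub
  rw [hval] at this
  exact this

/-- Monotonicity for nonnegative functions. -/
lemma mono (M : MIHyp τ kr) {u v : C_c(X, ℝ)} (hu : ∀ x, 0 ≤ u x)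
    (huv : ∀ x, u x ≤ v x) : τ u ≤ τ v := by
  by_contra hc
  push_neg at hc
  have hkr := M.hkr
  have htv0 : 0 ≤ τ v := M.hqi.pos v fun x => (hu x).trans (huv x)
  have hlt : τ v / kr < τ u / kr := by
    apply div_lt_div_of_pos_right hc hkr
  set s := (τ v / kr + τ u / kr) / 2 with hsdef
  have hs1 : τ v / kr < s := by rw [hsdef]; linarith
  have hs2 : s < τ u / kr := by rw [hsdef]; linarith
  have hs0 : 0 < s := lt_of_le_of_lt (div_nonneg htv0 hkr.le) hs1
  have hfull := M.level_full' u hs0 hs2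
  have hnull := M.level_null' v hs0 hs1
  have hsub : {x | s < u x} ⊆ {x | s < v x} := fun x hx => lt_of_lt_of_le hx (huv x)
  have hmono := qiMeas_mono (τ := τ) hsub
  rw [hfull, hnull] at hmono
  rw [le_zero_iff, ENNReal.ofReal_eq_zero] at hmono
  linarith

lemma lip_core (M : MIHyp τ kr) {u v : C_c(X, ℝ)} {b : ℝ} (hb : 0 < b)
    (h1 : ∀ x, u x - v x ≤ b) (hbig : b < τ u / kr) :
    τ u / kr ≤ τ v / kr + 2 * b := by
  by_contra hc
  push_neg at hc
  have hkr := M.hkr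
  set tu := τ u / kr with htudef
  set tv := τ v / kr with htvdef
  have hmax : max (tv + b) b < tu := max_lt (by linarith) hbig
  set s := (max (tv + b) b + tu) / 2 with hsdef
  have hs1 : max (tv + b) b < s := by rw [hsdef]; linarith
  have hs2 : s < tu := by rw [hsdef]; linarith
  have hs0 : 0 < s := lt_trans hb (lt_of_le_of_lt (le_max_right (tv + b) b) hs1)
  have hsb : tv < s - b := by
    have := le_max_left (tv + b) b
    linarith
  have hsb0 : 0 < s - b := by
    have := le_max_right (tv + b) b
    linarith
  have hfull := M.level_full' u hs0 hs2
  have hnull := M.level_null' v hsb0 hsb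
  have hsub : {x | s < u x} ⊆ {x | s - b < v x} := by
    intro x hx
    rw [mem_setOf_eq] at hx ⊢
    have := h1 x
    linarith
  have hmono := qiMeas_mono (τ := τ) hsub
  rw [hfull, hnull] at hmono
  rw [le_zero_iff, ENNReal.ofReal_eq_zero] at hmono
  linarith

lemma lip_one (M : MIHyp τ kr) {u v : C_c(X, ℝ)} {b : ℝ} (hb : 0 < b)
    (h1 : ∀ x, u x - v x ≤ b) : τ u ≤ τ v + 2 * kr * b := by
  have hkr := M.hkr
  have key : τ u / kr ≤ τ v / kr + 2 * b := by
    rcases lt_or_ge b (τ u / kr) with hbig | hsmall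
    · exact M.lip_core hb h1 hbig
    · rcases le_or_gt (-(τ v / kr)) b with h2 | h2
      · linarith
      · have h1' : ∀ x, (-v) x - (-u) x ≤ b := by
          intro x
          have hvx : (-v) x = -(v x) := rfl
          have hux : (-u) x = -(u x) := rfl
          rw [hvx, hux]
          have := h1 x
          linarith
        have hbig' : b < τ (-v) / kr := by
          rw [M.qi_neg v, neg_div]
          exact h2
        have := M.lip_core hb h1' hbig'
        rw [M.qi_neg v, M.qi_neg u, neg_div, neg_div] at this
        linarith
  have h1' : τ u = (τ u / kr) * kr := by field_simp
  have h2' : τ v = (τ v / kr) * kr := by field_simp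
  nlinarith [key, hkr]

lemma lip (M : MIHyp τ kr) {u v : C_c(X, ℝ)} {b : ℝ} (hb : 0 < b)
    (h : ∀ x, |u x - v x| ≤ b) : |τ u - τ v| ≤ 2 * kr * b := by
  have h1 : τ u ≤ τ v + 2 * kr * b :=
    M.lip_one hb (fun x => (le_abs_self _).trans (h x))
  have h2 : τ v ≤ τ u + 2 * kr * b := by
    refine M.lip_one hb (fun x => ?_)
    have := h x
    rw [abs_le] at this
    linarith [this.1]
  rw [abs_le]
  constructor <;> linarith

end MIHyp

end QLF
namespace QLF

open Set Topology

section Product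

variable {X Y : Type*} [TopologicalSpace X] [TopologicalSpace Y] [T2Space X] [T2Space Y]
variable {ρ : C_c(X, ℝ) → ℝ} {cr : ℝ}

lemma fiberY_apply (f : C_c(X × Y, ℝ)) (y : Y) (x : X) : fiberY f y x = f (x, y) := rfl

lemma fiberY_zero_of_nmem (f : C_c(X × Y, ℝ)) {y : Y} (hy : y ∉ Prod.snd '' tsupport f) :
    fiberY f y = 0 := by
  ext x
  show f (x, y) = 0
  apply image_eq_zero_of_notMem_tsupport
  intro hmem
  exact hy ⟨(x, y), hmem, rfl⟩

lemma fiberY_smul (a : ℝ) (f : C_c(X × Y, ℝ)) (y : Y) :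
    fiberY (a • f) y = a • fiberY f y := by
  ext x
  rfl

lemma fiberY_add (f g : C_c(X × Y, ℝ)) (y : Y) :
    fiberY (f + g) y = fiberY f y + fiberY g y := by
  ext x
  rfl

lemma fiberY_compCc (φ : C(ℝ, ℝ)) (hφ : φ 0 = 0) (f : C_c(X × Y, ℝ)) (y : Y) :
    fiberY (compCc φ hφ f) y = compCc φ hφ (fiberY f y) := by
  ext x
  rfl

lemma tmap_hcs (hρ : IsQuasiIntegral ρ) (f : C_c(X × Y, ℝ)) :
    HasCompactSupport (Tmap ρ f) := by
  have hK : IsCompact (Prod.snd '' tsupport f) := f.hasCompactSupport'.image continuous_snd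
  refine HasCompactSupport.intro hK ?_
  intro y hy
  show ρ (fiberY f y) = 0
  rw [fiberY_zero_of_nmem f hy, qi_zero hρ]

lemma tmap_continuous (M : MIHyp ρ cr) (f : C_c(X × Y, ℝ)) :
    Continuous (Tmap ρ f) := by
  rw [continuous_iff_continuousAt]
  intro y₀
  rw [ContinuousAt, Metric.tendsto_nhds]
  intro ε hε
  have hkr := M.hkr
  set b := ε / (4 * cr) with hbdef
  have hb : 0 < b := by rw [hbdef]; positivity
  set K := Prod.fst '' (tsupport f) with hKdef
  have hK : IsCompact K := f.hasCompactSupport'.image continuous_fst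
  set A := {p : X × Y | |f p - f (p.1, y₀)| < b} with hAdef
  have hAopen : IsOpen A := by
    have hcont : Continuous fun p : X × Y => |f p - f (p.1, y₀)| := by
      have h1 : Continuous fun p : X × Y => f (p.1, y₀) :=
        f.continuous.comp (continuous_fst.prodMk continuous_const)
      exact (f.continuous.sub h1).abs
    exact isOpen_lt hcont continuous_const
  have hsub : K ×ˢ ({y₀} : Set Y) ⊆ A := by
    rintro ⟨x, y⟩ hp
    rw [Set.mem_prod] at hp
    have hy : y = y₀ := hp.2
    rw [hAdef, mem_setOf_eq, hy]
    simpa using hb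
  obtain ⟨u', v', hu', hv', hKu', hyv', huv'⟩ :=
    generalized_tube_lemma hK isCompact_singleton hAopen hsub
  refine Filter.eventually_of_mem (hv'.mem_nhds (hyv' (mem_singleton y₀))) fun y hy => ?_
  have hbound : ∀ x, |fiberY f y x - fiberY f y₀ x| ≤ b := by
    intro x
    by_cases hx : x ∈ K
    · have hmem : (x, y) ∈ u' ×ˢ v' := ⟨hKu' hx, hy⟩
      have := huv' hmem
      rw [hAdef, mem_setOf_eq] at this
      exact this.le
    · have hx1 : f (x, y) = 0 := by
        apply image_eq_zero_of_notMem_tsupport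
        intro hmem
        exact hx ⟨(x, y), hmem, rfl⟩
      have hx2 : f (x, y₀) = 0 := by
        apply image_eq_zero_of_notMem_tsupport
        intro hmem
        exact hx ⟨(x, y₀), hmem, rfl⟩
      rw [fiberY_apply, fiberY_apply, hx1, hx2]
      simpa using hb.le
  have hlip := M.lip hb hbound
  rw [Real.dist_eq]
  show |ρ (fiberY f y) - ρ (fiberY f y₀)| < ε
  calc |ρ (fiberY f y) - ρ (fiberY f y₀)| ≤ 2 * cr * b := hlip
  _ = ε / 2 := by rw [hbdef]; field_simp; ring
  _ < ε := by linarith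

lemma tcc_coe (M : MIHyp ρ cr) (f : C_c(X × Y, ℝ)) : ⇑(TCc ρ f) = Tmap ρ f := by
  rw [TCc, dif_pos ⟨tmap_continuous M f, tmap_hcs M.hqi f⟩]
  rfl

lemma tcc_apply (M : MIHyp ρ cr) (f : C_c(X × Y, ℝ)) (y : Y) :
    TCc ρ f y = ρ (fiberY f y) := by
  rw [show TCc ρ f y = (⇑(TCc ρ f)) y from rfl, tcc_coe M]
  rfl

/-- `T` of a composition: `T (φ ∘ f) = Φ ∘ T f` where `Φ (s) = cr * φ (s / cr)`. -/
lemma tcc_compCc (M : MIHyp ρ cr) (f : C_c(X × Y, ℝ)) (φ : C(ℝ, ℝ)) (hφ : φ 0 = 0) :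
    TCc ρ (compCc φ hφ f) =
      compCc ⟨fun s => cr * φ (s / cr), by fun_prop⟩ (by simp [hφ]) (TCc ρ f) := by
  ext y
  rw [tcc_apply M, fiberY_compCc, M.mi (fiberY f y) φ hφ]
  show cr * φ (ρ (fiberY f y) / cr) = cr * φ (TCc ρ f y / cr)
  rw [tcc_apply M]

lemma tcc_smul (M : MIHyp ρ cr) (a : ℝ) (f : C_c(X × Y, ℝ)) :
    TCc ρ (a • f) = a • TCc ρ f := by
  ext y
  rw [tcc_apply M, fiberY_smul, M.hqi.smul]
  show a * ρ (fiberY f y) = a • (TCc ρ f y)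
  rw [tcc_apply M]
  rfl

/-- The product functional is a quasi-integral. -/
theorem prodQI_isQuasiIntegral {η : C_c(Y, ℝ) → ℝ} (M : MIHyp ρ cr)
    (hη : IsQuasiIntegral η) : IsQuasiIntegral (prodQI η ρ) := by
  constructor
  · intro a f
    show η (TCc ρ (a • f)) = a * η (TCc ρ f)
    rw [tcc_smul M, hη.smul]
  · rintro f g h ⟨φ, hφ0, hgf⟩ ⟨ψ, hψ0, hhf⟩
    have hg : g = compCc φ hφ0 f := by ext p; exact hgf p
    have hh : h = compCc ψ hψ0 f := by ext p; exact hhf p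
    show η (TCc ρ (g + h)) = η (TCc ρ g) + η (TCc ρ h)
    have hsum : TCc ρ (g + h) = TCc ρ g + TCc ρ h := by
      ext y
      rw [show (TCc ρ g + TCc ρ h) y = TCc ρ g y + TCc ρ h y from rfl]
      rw [tcc_apply M, tcc_apply M, tcc_apply M, fiberY_add]
      refine M.hqi.add (fiberY f y) _ _ ?_ ?_
      · exact ⟨φ, hφ0, fun x => by rw [hg]; rfl⟩
      · exact ⟨ψ, hψ0, fun x => by rw [hh]; rfl⟩
    rw [hsum]
    refine hη.add (TCc ρ f) _ _ ?_ ?_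
    · refine ⟨⟨fun s => cr * φ (s / cr), by fun_prop⟩, by simp [hφ0], fun y => ?_⟩
      rw [hg, tcc_compCc M f φ hφ0]
      rfl
    · refine ⟨⟨fun s => cr * ψ (s / cr), by fun_prop⟩, by simp [hψ0], fun y => ?_⟩
      rw [hh, tcc_compCc M f ψ hψ0]
      rfl
  · intro f hf
    show 0 ≤ η (TCc ρ f)
    refine hη.pos _ fun y => ?_
    rw [tcc_apply M]
    exact M.hqi.pos _ fun x => hf (x, y)

/-- The master identity for the product functional. -/
lemma prodQI_mi {η : C_c(Y, ℝ) → ℝ} {dr : ℝ} (M : MIHyp ρ cr) (N : MIHyp η dr) :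
    MIHyp (prodQI η ρ) (cr * dr) := by
  have hqi := prodQI_isQuasiIntegral M N.hqi
  refine ⟨hqi, mul_pos M.hkr N.hkr, ?_⟩
  intro f φ hφ
  show η (TCc ρ (compCc φ hφ f)) = cr * dr * φ (η (TCc ρ f) / (cr * dr))
  rw [tcc_compCc M f φ hφ]
  rw [N.mi (TCc ρ f) _ _]
  show dr * (cr * φ (η (TCc ρ f) / dr / cr)) = cr * dr * φ (η (TCc ρ f) / (cr * dr))
  rw [div_div, mul_comm dr cr]
  ring

end Product

end QLF
namespace QLF

open Set Topology

section Slices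

variable {X Y : Type*} [TopologicalSpace X] [TopologicalSpace Y]

/-- The horizontal slice of a subset of a product. -/
def sliceY (A : Set (X × Y)) (y : Y) : Set X := {x | (x, y) ∈ A}

lemma sliceY_mono {A B : Set (X × Y)} (h : A ⊆ B) (y : Y) : sliceY A y ⊆ sliceY B y :=
  fun _ hx => h hx

lemma sliceY_union (A B : Set (X × Y)) (y : Y) :
    sliceY (A ∪ B) y = sliceY A y ∪ sliceY B y := rfl

lemma isOpen_sliceY {A : Set (X × Y)} (hA : IsOpen A) (y : Y) : IsOpen (sliceY A y) :=
  hA.preimage (continuous_id.prodMk continuous_const)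

lemma isClosed_sliceY {A : Set (X × Y)} (hA : IsClosed A) (y : Y) : IsClosed (sliceY A y) :=
  hA.preimage (continuous_id.prodMk continuous_const)

lemma sliceY_eq_image (A : Set (X × Y)) (y : Y) :
    sliceY A y = Prod.fst '' (A ∩ (Set.univ ×ˢ {y})) := by
  ext x
  constructor
  · intro hx
    exact ⟨(x, y), ⟨hx, ⟨mem_univ _, rfl⟩⟩, rfl⟩
  · rintro ⟨⟨x', y'⟩, ⟨hp, ⟨-, hy'⟩⟩, rfl⟩
    simp only [mem_singleton_iff] at hy'
    rw [hy'] at hp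
    exact hp

lemma isCompact_sliceY [T2Space X] [T2Space Y] {A : Set (X × Y)} (hA : IsCompact A) (y : Y) :
    IsCompact (sliceY A y) := by
  rw [sliceY_eq_image]
  exact (hA.inter_right (isClosed_univ.prod isClosed_singleton)).image continuous_fst

lemma sliceY_empty_of_nmem {A : Set (X × Y)} {y : Y} (hy : y ∉ Prod.snd '' A) :
    sliceY A y = ∅ := by
  ext x
  simp only [sliceY, mem_setOf_eq, mem_empty_iff_false, iff_false]
  intro hx
  exact hy ⟨(x, y), hx, rfl⟩

end Slices

section TSets

variable {X Y : Type*} [TopologicalSpace X] [TopologicalSpace Y] [T2Space X] [T2Space Y]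
variable {ρ : C_c(X, ℝ) → ℝ} {c : ℝ≥0∞}

/-- The set of `y` whose slice is full. -/
def TS (ρ : C_c(X, ℝ) → ℝ) (c : ℝ≥0∞) (A : Set (X × Y)) : Set Y :=
  {y | qiMeas ρ (sliceY A y) = c}

lemma measure_le_c (HX : SimpleQIHyp ρ c) (S : Set X) : qiMeas ρ S ≤ c := by
  have := HX.toMIHyp.qiMeas_le S
  rwa [HX.k_eq] at this

lemma mem_TS {A : Set (X × Y)} {y : Y} : y ∈ TS ρ c A ↔ qiMeas ρ (sliceY A y) = c :=
  Iff.rfl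

lemma TS_mono (HX : SimpleQIHyp ρ c) {A B : Set (X × Y)} (h : A ⊆ B) :
    TS ρ c A ⊆ TS (Y := Y) ρ c B := by
  intro y hy
  rw [mem_TS] at hy ⊢
  refine le_antisymm (measure_le_c HX _) ?_
  rw [← hy]
  exact qiMeas_mono (sliceY_mono h y)

lemma qiMeas_empty_set (HX : SimpleQIHyp ρ c) : qiMeas ρ (∅ : Set X) = 0 := by
  rw [qiMeas_open isOpen_empty, qiOpen_empty HX.hqi]

lemma TS_subset_proj (HX : SimpleQIHyp ρ c) (A : Set (X × Y)) :
    TS ρ c A ⊆ Prod.snd '' A := by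
  intro y hy
  by_contra hc
  rw [mem_TS, sliceY_empty_of_nmem hc, qiMeas_empty_set HX] at hy
  exact HX.hk0 hy.symm

/-- A full open set contains a full compact set. -/
lemma exists_full_compact (HX : SimpleQIHyp ρ c) {U : Set X} (hU : IsOpen U)
    (hfull : qiMeas ρ U = c) : ∃ K : Set X, IsCompact K ∧ K ⊆ U ∧ qiMeas ρ K = c := by
  by_contra hc
  push_neg at hc
  have hzero : ∀ K : Set X, IsCompact K → K ⊆ U → qiMeas ρ K = 0 := by
    intro K hK hKU
    rcases HX.htwo K (Or.inr hK.isClosed) with h | h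
    · exact h
    · exact absurd h (hc K hK hKU)
  have : qiMeas ρ U = 0 := by
    rw [qiMeas_open hU, qiOpen_eq_iSup_compact HX.hqi hU]
    refine le_antisymm (iSup₂_le fun K hK => ?_) zero_le
    rw [hzero K hK.1 hK.2]
  rw [this] at hfull
  exact HX.hk0 hfull.symm

/-- A null closed set is contained in a null open set. -/
lemma exists_null_open (HX : SimpleQIHyp ρ c) {F : Set X}
    (hnull : qiMeas ρ F = 0) : ∃ O : Set X, IsOpen O ∧ F ⊆ O ∧ qiMeas ρ O = 0 := by
  by_contra hc
  push_neg at hc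
  have hc' : ∀ O : Set X, IsOpen O → F ⊆ O → qiMeas ρ O = c := by
    intro O hO hFO
    rcases HX.htwo O (Or.inl hO) with h | h
    · exact absurd h (hc O hO hFO)
    · exact h
  have : c ≤ qiMeas ρ F := by
    rw [qiMeas_eq_iInf_open]
    refine le_iInf₂ fun U hU => ?_
    rw [hc' U hU.1 hU.2]
  rw [hnull] at this
  exact HX.hk0 (le_zero_iff.mp this)

lemma isOpen_TS (HX : SimpleQIHyp ρ c) {A : Set (X × Y)} (hA : IsOpen A) :
    IsOpen (TS ρ c A) := by
  rw [isOpen_iff_mem_nhds]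
  intro y hy
  rw [mem_TS] at hy
  obtain ⟨K, hKcpt, hKsub, hKfull⟩ :=
    exists_full_compact HX (isOpen_sliceY hA y) (by rwa [qiMeas_open (isOpen_sliceY hA y)] at hy ⊢)
  have hprod : K ×ˢ ({y} : Set Y) ⊆ A := by
    rintro ⟨x, y'⟩ hp
    rw [Set.mem_prod] at hp
    have : y' = y := hp.2
    rw [this]
    exact hKsub hp.1
  obtain ⟨a, b, hao, hbo, hKa, hyb, hab⟩ :=
    generalized_tube_lemma hKcpt isCompact_singleton hA hprod
  refine Filter.mem_of_superset (hbo.mem_nhds (hyb (mem_singleton y))) ?_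
  intro y' hy'
  rw [mem_TS]
  refine le_antisymm (measure_le_c HX _) ?_
  rw [← hKfull]
  refine qiMeas_mono ?_
  intro x hx
  exact hab ⟨hKa hx, hy'⟩

lemma isClosed_TS (HX : SimpleQIHyp ρ c) {A : Set (X × Y)} (hA : IsCompact A) :
    IsClosed (TS ρ c A) := by
  rw [← isOpen_compl_iff, isOpen_iff_mem_nhds]
  intro y hy
  rw [mem_compl_iff, mem_TS] at hy
  have hyslice : qiMeas ρ (sliceY A y) = 0 := by
    rcases HX.htwo _ (Or.inr (isClosed_sliceY hA.isClosed y)) with h | h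
    · exact h
    · exact absurd h hy
  obtain ⟨O, hOopen, hOsub, hOnull⟩ := exists_null_open HX hyslice
  set N := {y' : Y | sliceY A y' ⊆ O} with hNdef
  have hNopen : IsOpen N := by
    have him : IsClosed (Prod.snd '' (A ∩ (Oᶜ ×ˢ (Set.univ : Set Y)))) :=
      ((hA.inter_right ((hOopen.isClosed_compl).prod isClosed_univ)).image
        continuous_snd).isClosed
    have heq : N = (Prod.snd '' (A ∩ (Oᶜ ×ˢ (Set.univ : Set Y))))ᶜ := by
      ext y'
      simp only [hNdef, mem_setOf_eq, mem_compl_iff]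
      constructor
      · intro hsub hmem
        rw [mem_image] at hmem
        obtain ⟨⟨x', y''⟩, hin, hy''⟩ := hmem
        cases hy''
        exact hin.2.1 (hsub hin.1)
      · intro h x hx
        by_contra hxO
        exact h ⟨(x, y'), ⟨hx, ⟨hxO, mem_univ _⟩⟩, rfl⟩
    rw [heq]
    exact him.isOpen_compl
  refine Filter.mem_of_superset (hNopen.mem_nhds (by rw [hNdef]; exact hOsub)) ?_
  intro y' hy'
  rw [mem_compl_iff, mem_TS]
  intro hfull
  have := (qiMeas_mono hy').trans hOnull.le
  rw [hfull] at this
  exact HX.hk0 (le_zero_iff.mp this)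

lemma isOpen_slice_subset {A : Set (X × Y)} (hA : IsCompact A) {O : Set X} (hO : IsOpen O) :
    IsOpen {y' : Y | sliceY A y' ⊆ O} := by
  have him : IsClosed (Prod.snd '' (A ∩ (Oᶜ ×ˢ (Set.univ : Set Y)))) :=
    ((hA.inter_right ((hO.isClosed_compl).prod isClosed_univ)).image continuous_snd).isClosed
  have heq : {y' : Y | sliceY A y' ⊆ O} = (Prod.snd '' (A ∩ (Oᶜ ×ˢ (Set.univ : Set Y))))ᶜ := by
    ext y'
    simp only [mem_setOf_eq, mem_compl_iff]
    constructor
    · intro hsub hmem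
      rw [mem_image] at hmem
      obtain ⟨⟨x', y''⟩, hin, hy''⟩ := hmem
      cases hy''
      exact hin.2.1 (hsub hin.1)
    · intro h x hx
      by_contra hxO
      exact h ⟨(x, y'), ⟨hx, ⟨hxO, mem_univ _⟩⟩, rfl⟩
  rw [heq]
  exact him.isOpen_compl

lemma isCompact_TS (HX : SimpleQIHyp ρ c) {A : Set (X × Y)} (hA : IsCompact A) :
    IsCompact (TS ρ c A) :=
  IsCompact.of_isClosed_subset (hA.image continuous_snd) (isClosed_TS HX hA)
    (TS_subset_proj HX A)

end TSets

end QLF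
namespace QLF

open Set Topology

section Char

variable {X Y : Type*} [TopologicalSpace X] [TopologicalSpace Y]
  [T2Space X] [T2Space Y] [LocallyCompactSpace X] [LocallyCompactSpace Y]
variable {ρ : C_c(X, ℝ) → ℝ} {η : C_c(Y, ℝ) → ℝ} {c d : ℝ≥0∞}

lemma e_eq (HX : SimpleQIHyp ρ c) (HY : SimpleQIHyp η d) :
    ENNReal.ofReal (c.toReal * d.toReal) = c * d := by
  rw [ENNReal.ofReal_mul ENNReal.toReal_nonneg, HX.k_eq, HY.k_eq]

/-- If the product measure of an open set is nonzero then its slice-full set is full. -/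
lemma lam_open_ne_zero (HX : SimpleQIHyp ρ c) (HY : SimpleQIHyp η d)
    {W : Set (X × Y)} (hW : IsOpen W) (hne : qiMeas (prodQI η ρ) W ≠ 0) :
    qiMeas η (TS ρ c W) = d := by
  have MX := HX.toMIHyp
  have MY := HY.toMIHyp
  have hcr := HX.kr_pos
  have hdr := HY.kr_pos
  have hpos : 0 < qiOpen (prodQI η ρ) W := by
    rw [← qiMeas_open hW]
    exact zero_le.lt_of_ne (Ne.symm hne)
  obtain ⟨g, hgtest, hgsub, hgpos⟩ := exists_test_gt le_rfl (by simpa using hpos)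
  have hgpos' : 0 < η (TCc ρ g) := hgpos
  set s := η (TCc ρ g) / d.toReal / 2 with hsdef
  have hs0 : 0 < s := by rw [hsdef]; positivity
  have hs1 : s < η (TCc ρ g) / d.toReal := by
    rw [hsdef]
    have : 0 < η (TCc ρ g) / d.toReal := by positivity
    linarith
  have hlevel : qiMeas η {y | s < TCc ρ g y} = d := by
    have := MY.level_full' (TCc ρ g) hs0 hs1
    rwa [HY.k_eq] at this
  set α := s / (2 * c.toReal) with hαdef
  have hα0 : 0 < α := by rw [hαdef]; positivity
  set G := {p : X × Y | α < g p} with hGdef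
  have hGsubW : G ⊆ W := by
    intro p hp
    refine hgsub (subset_tsupport _ ?_)
    intro h0
    rw [hGdef, mem_setOf_eq, h0] at hp
    linarith
  have hsub2 : {y | s < TCc ρ g y} ⊆ TS ρ c W := by
    intro y hy
    rw [mem_setOf_eq, tcc_apply MX] at hy
    have hαlt : α < ρ (fiberY g y) / c.toReal := by
      rw [hαdef]
      have h1 : s / (2 * c.toReal) < s / c.toReal := by
        apply div_lt_div_of_pos_left hs0 hcr
        linarith
      have h2 : s / c.toReal < ρ (fiberY g y) / c.toReal :=
        div_lt_div_of_pos_right hy hcr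
      linarith
    have hfull := MX.level_full' (fiberY g y) hα0 hαlt
    refine TS_mono HX hGsubW ?_
    rw [mem_TS]
    have hseteq : sliceY G y = {x | α < fiberY g y x} := rfl
    rw [hseteq, hfull, HX.k_eq]
  refine le_antisymm (measure_le_c HY _) ?_
  rw [← hlevel]
  exact qiMeas_mono hsub2

/-- If the slice-full set of an open set contains a full compact set,
then the product measure of the open set is full. -/
lemma lam_full_of_full_compact (HX : SimpleQIHyp ρ c) (HY : SimpleQIHyp η d)
    {A : Set (X × Y)} (hA : IsOpen A) {M : Set Y} (hMcpt : IsCompact M)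
    (hMsub : M ⊆ TS ρ c A) (hMfull : qiMeas η M = d) :
    qiMeas (prodQI η ρ) A = c * d := by
  classical
  have MX := HX.toMIHyp
  have MY := HY.toMIHyp
  have hcr := HX.kr_pos
  have hdr := HY.kr_pos
  have hdata : ∀ y ∈ M, ∃ (a : Set X) (b : Set Y) (u : C_c(X, ℝ)),
      IsOpen b ∧ y ∈ b ∧ (∀ x, 0 ≤ u x ∧ u x ≤ 1) ∧ tsupport (⇑u) ⊆ a ∧
      a ×ˢ b ⊆ A ∧ ρ u = c.toReal := by
    intro y hy
    have hyTS := hMsub hy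
    rw [mem_TS] at hyTS
    obtain ⟨K, hKcpt, hKsub, hKfull⟩ := exists_full_compact HX (isOpen_sliceY hA y) hyTS
    have hprod : K ×ˢ ({y} : Set Y) ⊆ A := by
      rintro ⟨x, y'⟩ hp
      rw [Set.mem_prod] at hp
      have : y' = y := hp.2
      rw [this]
      exact hKsub hp.1
    obtain ⟨a, b, hao, hbo, hKa, hyb, hab⟩ :=
      generalized_tube_lemma hKcpt isCompact_singleton hA hprod
    have hafull : qiOpen ρ a = c := by
      have h1 : qiMeas ρ a ≤ c := measure_le_c HX a
      have h2 : c ≤ qiMeas ρ a := by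
        rw [← hKfull]
        exact qiMeas_mono hKa
      rw [← qiMeas_open hao]
      exact le_antisymm h1 h2
    obtain ⟨u, hutest, husub, huval⟩ := MX.exists_exact_test
      (by rw [hafull]; exact pos_iff_ne_zero.mpr HX.hk0)
    exact ⟨a, b, u, hbo, hyb (mem_singleton y), hutest, husub, hab, huval⟩
  choose! a b u hbo hyb hutest husub hab huval using hdata
  obtain ⟨t, htcov⟩ := hMcpt.elim_nhds_subcover' (fun y hy => b y)
    (fun y hy => (hbo y hy).mem_nhds (hyb y hy))
  obtain ⟨K, hKcpt, hKsub, hKcov⟩ := hMcpt.finite_compact_cover t (fun i => b i.1)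
    (fun i _ => hbo i.1 i.2) htcov
  have hidata : ∀ i : ↥M, ∃ (L : Set Y) (w : C(Y, ℝ)),
      IsCompact L ∧ L ⊆ b i.1 ∧ Set.EqOn w 1 (K i) ∧ tsupport (⇑w) ⊆ L ∧
      (∀ y, 0 ≤ w y ∧ w y ≤ 1) ∧ HasCompactSupport w := by
    intro i
    obtain ⟨L, hLcpt, hKint, hLb⟩ := exists_compact_between (hKcpt i) (hbo i.1 i.2) (hKsub i)
    obtain ⟨w, hw1, hw0, hwcs, hwIcc⟩ := exists_continuous_one_zero_of_isCompact (hKcpt i)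
      (isOpen_interior.isClosed_compl)
      (by
        rw [Set.disjoint_compl_right_iff_subset]
        exact hKint)
    refine ⟨L, w, hLcpt, hLb, hw1, ?_, fun y => ⟨(hwIcc y).1, (hwIcc y).2⟩, hwcs⟩
    have hsupp : Function.support (⇑w) ⊆ interior L := by
      intro y hy
      by_contra hyc
      exact hy (hw0 hyc)
    calc tsupport (⇑w) ⊆ closure (interior L) := closure_mono hsupp
    _ ⊆ L := closure_minimal interior_subset hLcpt.isClosed
  choose Lc w hLcpt2 hLb hw1 hwsub hwIcc hwcs using hidata
  set S : C_c(X × Y, ℝ) := ∑ i ∈ t, tensor (u i.1) ⟨w i, hwcs i⟩ with hSdef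
  have hSapp : ∀ p : X × Y, S p = ∑ i ∈ t, u i.1 p.1 * w i p.2 := by
    intro p
    rw [hSdef, CompactlySupportedContinuousMap.sum_apply]
    exact Finset.sum_congr rfl (fun i _ => rfl)
  have hSpos : ∀ p, 0 ≤ S p := fun p => by
    rw [hSapp]
    exact Finset.sum_nonneg fun i _ => mul_nonneg (hutest i.1 i.2 p.1).1 (hwIcc i p.2).1
  set min1 : C(ℝ, ℝ) := ⟨fun s => min s 1, by fun_prop⟩ with hmin1def
  have hmin10 : min1 0 = 0 := by simp [hmin1def]
  set g : C_c(X × Y, ℝ) := compCc min1 hmin10 S with hgdef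
  have hgapp : ∀ p, g p = min (S p) 1 := fun p => rfl
  have hgtest : ∀ p, 0 ≤ g p ∧ g p ≤ 1 := fun p =>
    ⟨by rw [hgapp]; exact le_min (hSpos p) zero_le_one, by rw [hgapp]; exact min_le_right _ _⟩
  have hgsub : tsupport (⇑g) ⊆ A := by
    have hclosed : IsClosed (⋃ i ∈ t, (tsupport (⇑(u i.1)) ×ˢ Lc i)) :=
      Set.Finite.isClosed_biUnion t.finite_toSet
        (fun i _ => (isClosed_tsupport _).prod (hLcpt2 i).isClosed)
    have hsupp : Function.support (⇑g) ⊆ ⋃ i ∈ t, (tsupport (⇑(u i.1)) ×ˢ Lc i) := by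
      intro p hp
      have hp' : g p ≠ 0 := hp
      have hSne : S p ≠ 0 := by
        intro h0
        rw [hgapp, h0] at hp'
        simp at hp'
      rw [hSapp] at hSne
      obtain ⟨i, hit, hine⟩ := Finset.exists_ne_zero_of_sum_ne_zero hSne
      refine mem_biUnion hit ⟨?_, ?_⟩
      · exact subset_tsupport _ (fun h0 => hine (by rw [h0, zero_mul]))
      · exact hwsub i (subset_tsupport _ (fun h0 => hine (by rw [h0, mul_zero])))
    refine subset_trans (closure_minimal hsupp hclosed) ?_
    refine Set.iUnion₂_subset fun i hi => ?_
    exact subset_trans (Set.prod_mono (husub i.1 i.2) (hLb i)) (hab i.1 i.2)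
  have hval : ∀ y ∈ M, c.toReal ≤ ρ (fiberY g y) := by
    intro y hy
    have hy' := hy
    rw [hKcov, Set.mem_iUnion₂] at hy'
    obtain ⟨i, hit, hyKi⟩ := hy'
    have hwi : w i y = 1 := hw1 i hyKi
    have hpt : ∀ x, u i.1 x ≤ fiberY g y x := by
      intro x
      have h1 : u i.1 x * w i y ≤ S (x, y) := by
        rw [hSapp]
        exact Finset.single_le_sum
          (fun j _ => mul_nonneg (hutest j.1 j.2 x).1 (hwIcc j y).1) hit
      rw [hwi, mul_one] at h1
      rw [fiberY_apply, hgapp]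
      exact le_min h1 (hutest i.1 i.2 x).2
    have hmono := MX.mono (fun x => (hutest i.1 i.2 x).1) hpt
    rw [huval i.1 i.2] at hmono
    exact hmono
  have hπpos : 0 < prodQI η ρ g := by
    show 0 < η (TCc ρ g)
    by_contra hle
    push_neg at hle
    have hlevel : qiMeas η {y | c.toReal / 2 < TCc ρ g y} = 0 := by
      refine MY.level_null' (TCc ρ g) (by positivity) ?_
      have hd0 : η (TCc ρ g) / d.toReal ≤ 0 :=
        div_nonpos_iff.mpr (Or.inr ⟨hle, hdr.le⟩)
      linarith
    have hMsubl : M ⊆ {y | c.toReal / 2 < TCc ρ g y} := by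
      intro y hy
      rw [mem_setOf_eq, tcc_apply MX]
      linarith [hval y hy]
    have hcontr := (qiMeas_mono hMsubl).trans hlevel.le
    rw [hMfull] at hcontr
    exact HY.hk0 (le_zero_iff.mp hcontr)
  have Mπ := prodQI_mi MX MY
  have hne : qiMeas (prodQI η ρ) A ≠ 0 := by
    have hge : ENNReal.ofReal (prodQI η ρ g) ≤ qiMeas (prodQI η ρ) A := by
      rw [qiMeas_open hA]
      exact le_qiOpen (fun p => hgtest p) hgsub
    intro h0
    rw [h0, le_zero_iff, ENNReal.ofReal_eq_zero] at hge
    linarith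
  rcases Mπ.open_two_valued hA with h | h
  · exact absurd h hne
  · rw [h, e_eq HX HY]

end Char

end QLF
namespace QLF

open Set Topology

section Final

variable {X Y : Type*} [TopologicalSpace X] [TopologicalSpace Y]
  [T2Space X] [T2Space Y] [LocallyCompactSpace X] [LocallyCompactSpace Y]
variable {ρ : C_c(X, ℝ) → ℝ} {η : C_c(Y, ℝ) → ℝ} {c d : ℝ≥0∞}

lemma lam_eq_open (HX : SimpleQIHyp ρ c) (HY : SimpleQIHyp η d)
    {W : Set (X × Y)} (hW : IsOpen W) :
    qiMeas (prodQI η ρ) W = c * qiMeas η (TS ρ c W) := by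
  rcases HY.htwo (TS ρ c W) (Or.inl (isOpen_TS HX hW)) with h | h
  · rw [h, mul_zero]
    by_contra hne
    have hfull := lam_open_ne_zero HX HY hW hne
    rw [h] at hfull
    exact HY.hk0 hfull.symm
  · rw [h]
    obtain ⟨M, hMcpt, hMsub, hMfull⟩ := exists_full_compact HY (isOpen_TS HX hW) h
    exact lam_full_of_full_compact HX HY hW hMcpt hMsub hMfull

lemma lam_eq_compact (HX : SimpleQIHyp ρ c) (HY : SimpleQIHyp η d)
    {L : Set (X × Y)} (hL : IsCompact L) :
    qiMeas (prodQI η ρ) L = c * qiMeas η (TS ρ c L) := by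
  classical
  rcases HY.htwo (TS ρ c L) (Or.inr (isClosed_TS HX hL)) with h | h
  · -- null case: build an open superset with null product measure
    rw [h, mul_zero]
    obtain ⟨V, hVopen, hVsub, hVnull⟩ := exists_null_open HY h
    set P := Prod.snd '' L with hPdef
    have hPcpt : IsCompact P := hL.image continuous_snd
    set D := P \ V with hDdef
    have hDcpt : IsCompact D := hPcpt.diff hVopen
    have hDdata : ∀ y ∈ D, ∃ O : Set X, IsOpen O ∧ sliceY L y ⊆ O ∧ qiMeas ρ O = 0 := by
      intro y hy
      have hynTS : y ∉ TS ρ c L := fun hc => hy.2 (hVsub hc)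
      have hnull : qiMeas ρ (sliceY L y) = 0 := by
        rcases HX.htwo _ (Or.inr (isClosed_sliceY hL.isClosed y)) with h' | h'
        · exact h'
        · exact absurd h' hynTS
      exact exists_null_open HX hnull
    choose! O hOopen hOsub hOnull using hDdata
    have hNopen : ∀ y ∈ D, IsOpen {y' : Y | sliceY L y' ⊆ O y} :=
      fun y hy => isOpen_slice_subset hL (hOopen y hy)
    obtain ⟨t, htcov⟩ := hDcpt.elim_nhds_subcover' (fun y _ => {y' : Y | sliceY L y' ⊆ O y})
      (fun y hy => (hNopen y hy).mem_nhds (hOsub y hy))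
    obtain ⟨DK, hDKcpt, hDKsub, hDKcov⟩ := hDcpt.finite_compact_cover t
      (fun i => {y' : Y | sliceY L y' ⊆ O i.1}) (fun i _ => hNopen i.1 i.2) htcov
    have hCdata : ∀ i : ↥D, ∃ C : Set Y, IsCompact C ∧ DK i ⊆ interior C ∧
        C ⊆ {y' : Y | sliceY L y' ⊆ O i.1} :=
      fun i => exists_compact_between (hDKcpt i) (hNopen i.1 i.2) (hDKsub i)
    choose Cc hCcpt hCint hCsub using hCdata
    set W : Set (X × Y) := (Set.univ ×ˢ V) ∪
      ((Set.univ ×ˢ (⋃ i ∈ t, interior (Cc i))) ∩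
        ⋂ i ∈ t, ((Set.univ ×ˢ (Cc i)ᶜ) ∪ ((O i.1) ×ˢ (Set.univ : Set Y)))) with hWdef
    have hWopen : IsOpen W := by
      refine (isOpen_univ.prod hVopen).union (IsOpen.inter (isOpen_univ.prod ?_) ?_)
      · exact isOpen_biUnion fun i _ => isOpen_interior
      · refine Set.Finite.isOpen_biInter t.finite_toSet fun i hi => ?_
        exact (isOpen_univ.prod (hCcpt i).isClosed.isOpen_compl).union
          ((hOopen i.1 i.2).prod isOpen_univ)
    have hLW : L ⊆ W := by
      rintro ⟨x, y⟩ hxy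
      by_cases hyV : y ∈ V
      · exact Or.inl ⟨mem_univ _, hyV⟩
      · have hyD : y ∈ D := ⟨⟨(x, y), hxy, rfl⟩, hyV⟩
        have hyDK := hyD
        rw [hDKcov, Set.mem_iUnion₂] at hyDK
        obtain ⟨j, hjt, hyKj⟩ := hyDK
        refine Or.inr ⟨⟨mem_univ _, Set.mem_biUnion hjt (hCint j hyKj)⟩, ?_⟩
        rw [Set.mem_iInter₂]
        intro i hit
        by_cases hyC : y ∈ Cc i
        · exact Or.inr ⟨hCsub i hyC hxy, mem_univ _⟩
        · exact Or.inl ⟨mem_univ _, hyC⟩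
    have hTSW : TS ρ c W ⊆ V := by
      intro y hy
      by_contra hyV
      rw [mem_TS] at hy
      have hslice : qiMeas ρ (sliceY W y) = 0 := by
        by_cases hyU : y ∈ ⋃ i ∈ t, interior (Cc i)
        · rw [Set.mem_iUnion₂] at hyU
          obtain ⟨j, hjt, hyj⟩ := hyU
          have hsub : sliceY W y ⊆ O j.1 := by
            intro x hx
            rcases hx with hx | hx
            · exact absurd hx.2 hyV
            · have hx2 := hx.2
              rw [Set.mem_iInter₂] at hx2
              rcases hx2 j hjt with h' | h'
              · exact absurd (interior_subset hyj) h'.2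
              · exact h'.1
          have := (qiMeas_mono hsub).trans (hOnull j.1 j.2).le
          exact le_zero_iff.mp this
        · have hsub : sliceY W y = ∅ := by
            ext x
            simp only [mem_empty_iff_false, iff_false]
            intro hx
            rcases hx with hx | hx
            · exact hyV hx.2
            · exact hyU hx.1.2
          rw [hsub, qiMeas_empty_set HX]
      rw [hslice] at hy
      exact HX.hk0 hy.symm
    have hWnull : qiMeas (prodQI η ρ) W = 0 := by
      by_contra hne
      have hfull := lam_open_ne_zero HX HY hWopen hne
      have h2 : qiMeas η (TS ρ c W) ≤ qiMeas η V := qiMeas_mono hTSW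
      rw [hfull, hVnull] at h2
      exact HY.hk0 (le_zero_iff.mp h2)
    have := (qiMeas_mono hLW).trans hWnull.le
    exact le_zero_iff.mp this
  · -- full case
    rw [h]
    have hfullW : ∀ W : Set (X × Y), IsOpen W → L ⊆ W →
        qiMeas (prodQI η ρ) W = c * d := by
      intro W hWopen hLWsub
      exact lam_full_of_full_compact HX HY hWopen (isCompact_TS HX hL)
        (TS_mono HX hLWsub) h
    rw [qiMeas_eq_iInf_open (τ := prodQI η ρ) (F := L)]
    refine le_antisymm ?_ ?_
    · refine (iInf₂_le Set.univ ⟨isOpen_univ, subset_univ _⟩).trans ?_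
      rw [hfullW Set.univ isOpen_univ (subset_univ _)]
    · exact le_iInf₂ fun U hU => (hfullW U hU.1 hU.2).ge

end Final

end QLF
namespace QLF

open Set Topology

section Assemble

variable {X Y : Type*} [TopologicalSpace X] [TopologicalSpace Y]
  [T2Space X] [T2Space Y] [LocallyCompactSpace X] [LocallyCompactSpace Y]
variable {ρ : C_c(X, ℝ) → ℝ} {η : C_c(Y, ℝ) → ℝ} {c d : ℝ≥0∞}

lemma not_add_self_le (HX : SimpleQIHyp ρ c) (h : c + c ≤ c) : False :=
  HX.not_add_self (le_antisymm h le_self_add)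

lemma TS_union_eq (HX : SimpleQIHyp ρ c) {A B : Set (X × Y)} (hd : Disjoint A B)
    (hA : IsCompact A ∨ IsOpen A) (hB : IsCompact B ∨ IsOpen B)
    (hAB : IsCompact (A ∪ B) ∨ IsOpen (A ∪ B)) :
    TS ρ c (A ∪ B) = TS ρ c A ∪ TS ρ c B ∧ Disjoint (TS ρ c A) (TS (Y := Y) ρ c B) := by
  have hadm : ∀ {S : Set (X × Y)}, (IsCompact S ∨ IsOpen S) → ∀ y,
      IsCompact (sliceY S y) ∨ IsOpen (sliceY S y) := by
    intro S hS y
    rcases hS with h | h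
    · exact Or.inl (isCompact_sliceY h y)
    · exact Or.inr (isOpen_sliceY h y)
  have hocl : ∀ {S : Set X}, (IsCompact S ∨ IsOpen S) → (IsOpen S ∨ IsClosed S) := by
    rintro S (h | h)
    · exact Or.inr h.isClosed
    · exact Or.inl h
  have hadd : ∀ y, qiMeas ρ (sliceY (A ∪ B) y) =
      qiMeas ρ (sliceY A y) + qiMeas ρ (sliceY B y) := by
    intro y
    rw [sliceY_union]
    refine HX.hadd _ _ ?_ (hadm hA y) (hadm hB y) ?_
    · rw [Set.disjoint_left] at hd ⊢
      intro x hxA hxB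
      exact hd hxA hxB
    · rw [← sliceY_union]
      exact hadm hAB y
  have hle : ∀ y, qiMeas ρ (sliceY A y) + qiMeas ρ (sliceY B y) ≤ c := by
    intro y
    rw [← hadd y]
    exact measure_le_c HX _
  constructor
  · ext y
    rw [mem_union, mem_TS, mem_TS, mem_TS, hadd y]
    have ha2 := HX.htwo _ (hocl (hadm hA y))
    have hb2 := HX.htwo _ (hocl (hadm hB y))
    constructor
    · intro hsum
      rcases ha2 with ha | ha
      · rcases hb2 with hb | hb
        · exfalso
          rw [ha, hb, add_zero] at hsum
          exact HX.hk0 hsum.symm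
        · exact Or.inr hb
      · exact Or.inl ha
    · rintro (h | h)
      · rcases hb2 with hb | hb
        · rw [h, hb, add_zero]
        · exfalso
          refine not_add_self_le HX ?_
          have hc := hle y
          rw [h, hb] at hc
          exact hc
      · rcases ha2 with ha | ha
        · rw [h, ha, zero_add]
        · exfalso
          refine not_add_self_le HX ?_
          have hc := hle y
          rw [ha, h] at hc
          exact hc
  · rw [Set.disjoint_left]
    intro y hyA hyB
    rw [mem_TS] at hyA hyB
    refine not_add_self_le HX ?_
    have hc := hle y
    rw [hyA, hyB] at hc
    exact hc

lemma lam_eq (HX : SimpleQIHyp ρ c) (HY : SimpleQIHyp η d) {S : Set (X × Y)}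
    (hS : IsCompact S ∨ IsOpen S) :
    qiMeas (prodQI η ρ) S = c * qiMeas η (TS ρ c S) :=
  hS.elim (lam_eq_compact HX HY) (lam_eq_open HX HY)

lemma lam_additive (HX : SimpleQIHyp ρ c) (HY : SimpleQIHyp η d) {A B : Set (X × Y)}
    (hd : Disjoint A B) (hA : IsCompact A ∨ IsOpen A) (hB : IsCompact B ∨ IsOpen B)
    (hAB : IsCompact (A ∪ B) ∨ IsOpen (A ∪ B)) :
    qiMeas (prodQI η ρ) (A ∪ B) = qiMeas (prodQI η ρ) A + qiMeas (prodQI η ρ) B := by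
  obtain ⟨hTSu, hTSd⟩ := TS_union_eq HX hd hA hB hAB
  have hTOadm : ∀ {S : Set (X × Y)}, (IsCompact S ∨ IsOpen S) →
      (IsCompact (TS ρ c S) ∨ IsOpen (TS ρ c S)) := by
    rintro S (h | h)
    · exact Or.inl (isCompact_TS HX h)
    · exact Or.inr (isOpen_TS HX h)
  have hκadd : qiMeas η (TS ρ c (A ∪ B)) =
      qiMeas η (TS ρ c A) + qiMeas η (TS ρ c B) := by
    rw [hTSu]
    refine HY.hadd _ _ hTSd (hTOadm hA) (hTOadm hB) ?_
    rw [← hTSu]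
    exact hTOadm hAB
  rw [lam_eq HX HY hAB, lam_eq HX HY hA, lam_eq HX HY hB, hκadd, mul_add]

theorem prodQI_almostSimple (HX : SimpleQIHyp ρ c) (HY : SimpleQIHyp η d) :
    IsAlmostSimpleQI (prodQI η ρ) := by
  set e := c * d with hedef
  have he0 : e ≠ 0 := mul_ne_zero HX.hk0 HY.hk0
  have heT : e ≠ ⊤ := ENNReal.mul_ne_top HX.hkT HY.hkT
  have hinv0 : e⁻¹ ≠ 0 := ENNReal.inv_ne_zero.mpr heT
  have hinvT : e⁻¹ ≠ ⊤ := ENNReal.inv_ne_top.mpr he0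
  have hπqi : IsQuasiIntegral (prodQI η ρ) := prodQI_isQuasiIntegral HX.toMIHyp HY.hqi
  refine ⟨e, fun A => e⁻¹ * qiMeas (prodQI η ρ) A, pos_iff_ne_zero.mpr he0, heT,
    ⟨⟨?_, ?_, ?_⟩, ?_⟩, ?_⟩
  · intro A B hd hA hB hAB
    show e⁻¹ * qiMeas (prodQI η ρ) (A ∪ B) =
      e⁻¹ * qiMeas (prodQI η ρ) A + e⁻¹ * qiMeas (prodQI η ρ) B
    rw [lam_additive HX HY hd hA hB hAB, mul_add]
  · intro U hU
    show e⁻¹ * qiMeas (prodQI η ρ) U =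
      ⨆ (K : Set (X × Y)) (_ : IsCompact K ∧ K ⊆ U), e⁻¹ * qiMeas (prodQI η ρ) K
    rw [qiMeas_open hU, qiOpen_eq_iSup_compact hπqi hU, ENNReal.mul_iSup]
    congr 1
    ext K
    rw [ENNReal.mul_iSup]
  · intro F _
    show e⁻¹ * qiMeas (prodQI η ρ) F =
      ⨅ (U : Set (X × Y)) (_ : IsOpen U ∧ F ⊆ U), e⁻¹ * qiMeas (prodQI η ρ) U
    rw [qiMeas_eq_iInf_open (τ := prodQI η ρ) (F := F),
      ENNReal.mul_iInf_of_ne hinv0 hinvT]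
    congr 1
    ext U
    rw [ENNReal.mul_iInf_of_ne hinv0 hinvT]
  · intro A hA
    show e⁻¹ * qiMeas (prodQI η ρ) A = 0 ∨ e⁻¹ * qiMeas (prodQI η ρ) A = 1
    rcases (prodQI_mi HX.toMIHyp HY.toMIHyp).two_valued hA with h | h
    · left
      rw [h, mul_zero]
    · right
      rw [h, e_eq HX HY, ← hedef]
      exact ENNReal.inv_mul_cancel he0 heT
  · intro A _
    show qiMeas (prodQI η ρ) A = e * (e⁻¹ * qiMeas (prodQI η ρ) A)
    rw [← mul_assoc, ENNReal.mul_inv_cancel he0 heT, one_mul]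

end Assemble

section Bridge

variable {X : Type*} [TopologicalSpace X] [T2Space X]

lemma bridge {ρ : C_c(X, ℝ) → ℝ} (hρ : IsQuasiIntegral ρ) (has : IsAlmostSimpleQI ρ) :
    ∃ c : ℝ≥0∞, SimpleQIHyp ρ c := by
  obtain ⟨c, μ', hc0, hcT, ⟨⟨hadd, _, _⟩, htwo'⟩, heq⟩ := has
  refine ⟨c, hρ, hc0.ne', hcT, ?_, ?_⟩
  · intro A hA
    rcases htwo' A hA with h | h
    · left
      rw [heq A hA, h, mul_zero]
    · right
      rw [heq A hA, h, mul_one]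
  · intro A B hd hA hB hAB
    have hocl : ∀ {S : Set X}, (IsCompact S ∨ IsOpen S) → (IsOpen S ∨ IsClosed S) := by
      rintro S (h | h)
      · exact Or.inr h.isClosed
      · exact Or.inl h
    rw [heq _ (hocl hAB), heq _ (hocl hA), heq _ (hocl hB),
      hadd A B hd hA hB hAB, mul_add]

end Bridge

end QLF
namespace QLF
theorem statement11 {X Y : Type*}
    [TopologicalSpace X] [LocallyCompactSpace X] [T2Space X] [ConnectedSpace X]
    [TopologicalSpace Y] [LocallyCompactSpace Y] [T2Space Y] [ConnectedSpace Y]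
    (ρ : C_c(X, ℝ) → ℝ) (η : C_c(Y, ℝ) → ℝ)
    (hρ : IsQuasiIntegral ρ) (hη : IsQuasiIntegral η)
    (hρas : IsAlmostSimpleQI ρ) (hηas : IsAlmostSimpleQI η) :
    IsQuasiIntegral (prodQI η ρ) ∧ IsAlmostSimpleQI (prodQI η ρ) := by
  obtain ⟨c, HX⟩ := bridge hρ hρas
  obtain ⟨d, HY⟩ := bridge hη hηas
  exact ⟨prodQI_isQuasiIntegral HX.toMIHyp hη, prodQI_almostSimple HX HY⟩
end QLF
end
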